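/- arXiv:1112.3323 — 7 statements merged into one kernel-verified Lean document; each statement's English description precedes it below -/
import Mathlib

section
/- Suppose D: U → ([d] → A) is a derivation function, and for every subset S' of keys with |S'| = k' ≤ k there exist i ∈ [d] and x ∈ S' such that D_i(x) ≠ D_i(y) for all y ∈ S' \ {x}. Then for every set S of k keys, the derivation incidence matrix M_{D,S} has full row rank over GF(2). -/
/-- If for every nonempty set S' of at most k keys some key x ∈ S' has a derived character
D_i(x) distinct from D_i(y) for all other y ∈ S', then for every set S of k keys the
derivation incidence matrix (rows indexed by keys, columns by pairs (i,a), entry 1 iff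
D_i(x) = a) has full row rank over GF(2), i.e. its rows are linearly independent. -/
theorem stmt_2 {U A : Type*} [DecidableEq A] (d k : ℕ)
    (D : U → Fin d → A)
    (hpeel : ∀ S' : Finset U, S'.card ≤ k → S'.Nonempty →
      ∃ (i : Fin d) (x : U), x ∈ S' ∧ ∀ y ∈ S', y ≠ x → D y i ≠ D x i)
    (S : Finset U) (hS : S.card = k) :
    LinearIndependent (ZMod 2)
      (fun x : S => fun p : Fin d × A =>
        if D x.1 p.1 = p.2 then (1 : ZMod 2) else 0) := by
  classical
  rw [Fintype.linearIndependent_iff]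
  intro g hg
  by_contra hcon
  push_neg at hcon
  obtain ⟨x, hx⟩ := hcon
  set T : Finset U := (S.attach.filter (fun y => g y ≠ 0)).image Subtype.val with hT
  have hmemT : ∀ u : U, u ∈ T ↔ ∃ h : u ∈ S, g ⟨u, h⟩ ≠ 0 := by
    intro u
    simp only [hT, Finset.mem_image, Finset.mem_filter, Finset.mem_attach, true_and,
      Subtype.exists]
    constructor
    · rintro ⟨a, ha, hne, rfl⟩; exact ⟨ha, hne⟩
    · rintro ⟨h, hne⟩; exact ⟨u, h, hne, rfl⟩
  have hTsub : T ⊆ S := by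
    intro u hu
    obtain ⟨h, _⟩ := (hmemT u).1 hu
    exact h
  have hTcard : T.card ≤ k := hS ▸ Finset.card_le_card hTsub
  have hTne : T.Nonempty := ⟨x.1, (hmemT x.1).2 ⟨x.2, hx⟩⟩
  obtain ⟨i, x0, hx0T, huniq⟩ := hpeel T hTcard hTne
  have hx0S : x0 ∈ S := hTsub hx0T
  have hg0 : g ⟨x0, hx0S⟩ ≠ 0 := by
    obtain ⟨h, hne⟩ := (hmemT x0).1 hx0T
    exact hne
  have key := congrFun hg (i, D x0 i)
  simp only [Finset.sum_apply, Pi.smul_apply, smul_eq_mul, Pi.zero_apply] at key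
  rw [Finset.sum_eq_single (⟨x0, hx0S⟩ : S)] at key
  · exact hg0 (by simpa using key)
  · intro y _ hy
    by_cases hgy : g y = 0
    · simp [hgy]
    · have hyT : y.1 ∈ T := (hmemT y.1).2 ⟨y.2, hgy⟩
      have hne : D y.1 i ≠ D x0 i :=
        huniq y.1 hyT (fun h => hy (Subtype.ext h))
      simp [hne]
  · intro h; exact absurd (Finset.mem_univ _) h
end

section
/- For every d ≥ 1 and every set S of k distinct pairs (a,b) ∈ ℕ² with 1 ≤ k ≤ 2d−1, there exists a column c ∈ {0,...,d−1} and a value y such that the number of pairs (a,b) ∈ S with a + b·c = y is odd. Equivalently, there is no bad (2,d,k)-arrangement: it is impossible that for every c ∈ {0,...,d−1} and every y ∈ ℤ, the cardinality of {(a,b) ∈ S : a + b·c = y} is even. -/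
set_option maxHeartbeats 1000000


/-- There is no bad (2,d,k)-arrangement for 1 ≤ k ≤ 2d−1: for any set S of k distinct
keys (a,b) ∈ ℕ², some column c ∈ {0,...,d−1} has a point y met by an odd number of the
lines z ↦ a + b·z of S. -/
theorem stmt_5 (d : ℕ) (hd : 1 ≤ d) (S : Finset (ℕ × ℕ))
    (h1 : 1 ≤ S.card) (h2 : S.card ≤ 2 * d - 1) :
    ∃ c : ℕ, c < d ∧ ∃ y : ℤ,
      ¬ Even ((S.filter (fun p => (p.1 : ℤ) + (p.2 : ℤ) * (c : ℤ) = y)).card) := by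
  classical
  by_contra hcon
  push_neg at hcon
  have hne : S.Nonempty := Finset.card_pos.mp h1
  -- every element has a distinct "mate" in its fiber at every column
  have mate : ∀ c, c < d → ∀ p ∈ S, ∃ r ∈ S, r ≠ p ∧
      (r.1 : ℤ) + (r.2 : ℤ) * (c : ℤ) = (p.1 : ℤ) + (p.2 : ℤ) * (c : ℤ) := by
    intro c hc p hp
    have he := hcon c hc ((p.1 : ℤ) + (p.2 : ℤ) * (c : ℤ))
    set A := S.filter (fun q => (q.1 : ℤ) + (q.2 : ℤ) * (c : ℤ)
        = (p.1 : ℤ) + (p.2 : ℤ) * (c : ℤ)) with hA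
    have hpA : p ∈ A := Finset.mem_filter.mpr ⟨hp, rfl⟩
    have h1A : 1 < A.card := by
      have h0 : 0 < A.card := Finset.card_pos.mpr ⟨p, hpA⟩
      obtain ⟨t, ht⟩ := he
      omega
    obtain ⟨r, hrA, hrp⟩ := Finset.exists_mem_ne h1A p
    have := Finset.mem_filter.mp hrA
    exact ⟨r, this.1, hrp, this.2⟩
  -- minimizer with minimal slope
  have hmin : ∀ c, c < d → ∃ u, u ∈ S ∧
      (∀ v ∈ S, (u.1 : ℤ) + (u.2 : ℤ) * (c : ℤ) ≤ (v.1 : ℤ) + (v.2 : ℤ) * (c : ℤ)) ∧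
      (∀ v ∈ S, (v.1 : ℤ) + (v.2 : ℤ) * (c : ℤ) = (u.1 : ℤ) + (u.2 : ℤ) * (c : ℤ) →
        u.2 ≤ v.2) := by
    intro c _
    obtain ⟨z, hz, hzmin⟩ := S.exists_min_image
      (fun q : ℕ × ℕ => (q.1 : ℤ) + (q.2 : ℤ) * (c : ℤ)) hne
    set A := S.filter (fun q => (q.1 : ℤ) + (q.2 : ℤ) * (c : ℤ)
        = (z.1 : ℤ) + (z.2 : ℤ) * (c : ℤ)) with hA
    have hAne : A.Nonempty := ⟨z, Finset.mem_filter.mpr ⟨hz, rfl⟩⟩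
    obtain ⟨u, huA, humin⟩ := A.exists_min_image (fun q => q.2) hAne
    have hu := Finset.mem_filter.mp huA
    refine ⟨u, hu.1, ?_, ?_⟩
    · intro v hv
      have := hzmin v hv
      have h2 := hu.2
      linarith
    · intro v hv hveq
      have hvA : v ∈ A := Finset.mem_filter.mpr ⟨hv, by rw [hveq, hu.2]⟩
      exact humin v hvA
  -- maximizer with maximal slope
  have hmax : ∀ c, c < d → ∃ u, u ∈ S ∧
      (∀ v ∈ S, (v.1 : ℤ) + (v.2 : ℤ) * (c : ℤ) ≤ (u.1 : ℤ) + (u.2 : ℤ) * (c : ℤ)) ∧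
      (∀ v ∈ S, (v.1 : ℤ) + (v.2 : ℤ) * (c : ℤ) = (u.1 : ℤ) + (u.2 : ℤ) * (c : ℤ) →
        v.2 ≤ u.2) := by
    intro c _
    obtain ⟨z, hz, hzmax⟩ := S.exists_max_image
      (fun q : ℕ × ℕ => (q.1 : ℤ) + (q.2 : ℤ) * (c : ℤ)) hne
    set A := S.filter (fun q => (q.1 : ℤ) + (q.2 : ℤ) * (c : ℤ)
        = (z.1 : ℤ) + (z.2 : ℤ) * (c : ℤ)) with hA
    have hAne : A.Nonempty := ⟨z, Finset.mem_filter.mpr ⟨hz, rfl⟩⟩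
    obtain ⟨u, huA, humax⟩ := A.exists_max_image (fun q => q.2) hAne
    have hu := Finset.mem_filter.mp huA
    refine ⟨u, hu.1, ?_, ?_⟩
    · intro v hv
      have := hzmax v hv
      have h2 := hu.2
      linarith
    · intro v hv hveq
      have hvA : v ∈ A := Finset.mem_filter.mpr ⟨hv, by rw [hveq, hu.2]⟩
      exact humax v hvA
  choose! um humS humMin humLex using hmin
  choose! wm hwmS hwmMax hwmLex using hmax
  -- injectivity of um
  have uinj : ∀ c c' : ℕ, c < c' → c' < d → um c ≠ um c' := by
    intro c c' hlt hc'd heq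
    have hcd : c < d := lt_trans hlt hc'd
    set p := um c' with hp
    obtain ⟨r, hrS, hrne, hrF⟩ := mate c' hc'd p (humS c' hc'd)
    have e2 : (p.1 : ℤ) + (p.2 : ℤ) * (c : ℤ) ≤ (r.1 : ℤ) + (r.2 : ℤ) * (c : ℤ) := by
      have := humMin c hcd r hrS
      rw [heq] at this
      exact this
    have hlex : p.2 ≤ r.2 := humLex c' hc'd r hrS hrF
    have hlexZ : (p.2 : ℤ) ≤ (r.2 : ℤ) := by exact_mod_cast hlex
    have hltZ : (c : ℤ) < (c' : ℤ) := by exact_mod_cast hlt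
    have key : (0 : ℤ) ≤ ((p.2 : ℤ) - (r.2 : ℤ)) * ((c' : ℤ) - (c : ℤ)) := by
      nlinarith [e2, hrF]
    have key2 : ((p.2 : ℤ) - (r.2 : ℤ)) * ((c' : ℤ) - (c : ℤ)) ≤ 0 := by
      nlinarith [mul_nonneg (by linarith : (0:ℤ) ≤ (r.2:ℤ) - (p.2:ℤ))
        (by linarith : (0:ℤ) ≤ (c':ℤ) - (c:ℤ))]
    have hprod : ((p.2 : ℤ) - (r.2 : ℤ)) * ((c' : ℤ) - (c : ℤ)) = 0 := le_antisymm key2 key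
    have hb0 : (p.2 : ℤ) = (r.2 : ℤ) := by
      rcases mul_eq_zero.mp hprod with h | h
      · linarith
      · exfalso; apply absurd h; intro h'; linarith
    have ha : (r.1 : ℤ) = (p.1 : ℤ) := by
      rw [← hb0] at hrF
      linarith [hrF]
    exact hrne (Prod.ext_iff.mpr ⟨by exact_mod_cast ha, by exact_mod_cast hb0.symm⟩)
  -- injectivity of wm
  have winj : ∀ c c' : ℕ, c < c' → c' < d → wm c ≠ wm c' := by
    intro c c' hlt hc'd heq
    have hcd : c < d := lt_trans hlt hc'd
    set p := wm c' with hp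
    obtain ⟨r, hrS, hrne, hrF⟩ := mate c' hc'd p (hwmS c' hc'd)
    have e2 : (r.1 : ℤ) + (r.2 : ℤ) * (c : ℤ) ≤ (p.1 : ℤ) + (p.2 : ℤ) * (c : ℤ) := by
      have := hwmMax c hcd r hrS
      rw [heq] at this
      exact this
    have hlex : r.2 ≤ p.2 := hwmLex c' hc'd r hrS hrF
    have hlexZ : (r.2 : ℤ) ≤ (p.2 : ℤ) := by exact_mod_cast hlex
    have hltZ : (c : ℤ) < (c' : ℤ) := by exact_mod_cast hlt
    have key : ((p.2 : ℤ) - (r.2 : ℤ)) * ((c' : ℤ) - (c : ℤ)) ≤ 0 := by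
      nlinarith [e2, hrF]
    have key2 : (0 : ℤ) ≤ ((p.2 : ℤ) - (r.2 : ℤ)) * ((c' : ℤ) - (c : ℤ)) := by
      exact mul_nonneg (by linarith) (by linarith)
    have hprod : ((p.2 : ℤ) - (r.2 : ℤ)) * ((c' : ℤ) - (c : ℤ)) = 0 := le_antisymm key key2
    have hb0 : (p.2 : ℤ) = (r.2 : ℤ) := by
      rcases mul_eq_zero.mp hprod with h | h
      · linarith
      · exfalso; apply absurd h; intro h'; linarith
    have ha : (r.1 : ℤ) = (p.1 : ℤ) := by
      rw [← hb0] at hrF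
      linarith [hrF]
    exact hrne (Prod.ext_iff.mpr ⟨by exact_mod_cast ha, by exact_mod_cast hb0.symm⟩)
  -- um's and wm's are disjoint
  have cross : ∀ c c' : ℕ, c < d → c' < d → um c ≠ wm c' := by
    intro c c' hcd hc'd heq
    set p := wm c' with hp
    obtain ⟨r, hrS, hrne, hrF⟩ := mate c hcd (um c) (humS c hcd)
    rw [heq] at hrne hrF
    obtain ⟨s, hsS, hsne, hsF⟩ := mate c' hc'd p (hwmS c' hc'd)
    have hlexr : p.2 ≤ r.2 := by
      have := humLex c hcd r hrS (by rw [heq]; exact hrF)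
      rwa [heq] at this
    have hlexs : s.2 ≤ p.2 := hwmLex c' hc'd s hsS hsF
    have hrb : p.2 ≠ r.2 := by
      intro hb
      apply hrne
      have hbZ : (r.2 : ℤ) = (p.2 : ℤ) := by exact_mod_cast hb.symm
      have : (r.1 : ℤ) = (p.1 : ℤ) := by rw [hbZ] at hrF; linarith [hrF]
      exact Prod.ext_iff.mpr ⟨by exact_mod_cast this, hb.symm⟩
    have hsb : s.2 ≠ p.2 := by
      intro hb
      apply hsne
      have hbZ : (s.2 : ℤ) = (p.2 : ℤ) := by exact_mod_cast hb
      have : (s.1 : ℤ) = (p.1 : ℤ) := by rw [hbZ] at hsF; linarith [hsF]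
      exact Prod.ext_iff.mpr ⟨by exact_mod_cast this, hb⟩
    have hrbZ : (p.2 : ℤ) < (r.2 : ℤ) := by
      have := lt_of_le_of_ne hlexr hrb
      exact_mod_cast this
    have hsbZ : (s.2 : ℤ) < (p.2 : ℤ) := by
      have := lt_of_le_of_ne hlexs hsb
      exact_mod_cast this
    have hmaxr : (r.1 : ℤ) + (r.2 : ℤ) * (c' : ℤ) ≤ (p.1 : ℤ) + (p.2 : ℤ) * (c' : ℤ) :=
      hwmMax c' hc'd r hrS
    have hmins : (p.1 : ℤ) + (p.2 : ℤ) * (c : ℤ) ≤ (s.1 : ℤ) + (s.2 : ℤ) * (c : ℤ) := by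
      have := humMin c hcd s hsS
      rwa [heq] at this
    -- from r : c' ≤ c ; from s : c ≤ c'
    have hkey1 : ((r.2 : ℤ) - (p.2 : ℤ)) * ((c' : ℤ) - (c : ℤ)) ≤ 0 := by
      nlinarith [hrF, hmaxr]
    have hkey2 : ((s.2 : ℤ) - (p.2 : ℤ)) * ((c' : ℤ) - (c : ℤ)) ≤ 0 := by
      nlinarith [hsF, hmins]
    have h1' : (c' : ℤ) ≤ (c : ℤ) := by
      by_contra hcl
      push_neg at hcl
      nlinarith [mul_pos (by linarith : (0:ℤ) < (r.2:ℤ) - (p.2:ℤ))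
        (by linarith : (0:ℤ) < (c':ℤ) - (c:ℤ))]
    have h2' : (c : ℤ) ≤ (c' : ℤ) := by
      by_contra hcl
      push_neg at hcl
      nlinarith [mul_pos (by linarith : (0:ℤ) < (p.2:ℤ) - (s.2:ℤ))
        (by linarith : (0:ℤ) < (c:ℤ) - (c':ℤ))]
    have hcc : c = c' := by
      have : (c : ℤ) = (c' : ℤ) := le_antisymm h2' h1'
      exact_mod_cast this
    subst hcc
    -- column c is constant on S
    have hconst : ∀ v ∈ S, (v.1 : ℤ) + (v.2 : ℤ) * (c : ℤ) = (p.1 : ℤ) + (p.2 : ℤ) * (c : ℤ) := by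
      intro v hv
      have hle := hwmMax c hcd v hv
      have hge := humMin c hcd v hv
      rw [heq] at hge
      linarith
    -- S has at least 3 elements, so d ≥ 2
    have hrp : r ≠ p := hrne
    have hrs : r ≠ s := by
      intro h
      rw [h] at hrbZ
      linarith
    have hsp : s ≠ p := hsne
    have hcard3 : 3 ≤ S.card := by
      have hsub : ({r, s, p} : Finset (ℕ × ℕ)) ⊆ S := by
        intro x hx
        simp only [Finset.mem_insert, Finset.mem_singleton] at hx
        rcases hx with rfl | rfl | rfl
        · exact hrS
        · exact hsS
        · exact hwmS c hcd
      have hc3 : ({r, s, p} : Finset (ℕ × ℕ)).card = 3 := by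
        rw [Finset.card_insert_of_notMem (by simp [hrs, hrp]),
          Finset.card_insert_of_notMem (by simp [hsp]), Finset.card_singleton]
      calc 3 = ({r, s, p} : Finset (ℕ × ℕ)).card := hc3.symm
        _ ≤ S.card := Finset.card_le_card hsub
    have hd2 : 2 ≤ d := by omega
    -- pick another column c2 ≠ c
    set c2 := if c = 0 then 1 else 0 with hc2
    have hc2d : c2 < d := by
      rw [hc2]; split <;> omega
    have hc2c : c2 ≠ c := by
      rw [hc2]; split <;> omega
    obtain ⟨t, htS, htne, htF⟩ := mate c2 hc2d p (hwmS c hcd)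
    have htc : (t.1 : ℤ) + (t.2 : ℤ) * (c : ℤ) = (p.1 : ℤ) + (p.2 : ℤ) * (c : ℤ) :=
      hconst t htS
    have hzero : ((t.2 : ℤ) - (p.2 : ℤ)) * ((c2 : ℤ) - (c : ℤ)) = 0 := by
      linear_combination htF - htc
    have hc2cZ : (c2 : ℤ) - (c : ℤ) ≠ 0 := by
      intro h
      apply hc2c
      have : (c2 : ℤ) = (c : ℤ) := by linarith
      exact_mod_cast this
    have htb : (t.2 : ℤ) = (p.2 : ℤ) := by
      rcases mul_eq_zero.mp hzero with h | h
      · linarith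
      · exact absurd h hc2cZ
    have hta : (t.1 : ℤ) = (p.1 : ℤ) := by
      rw [htb] at htc
      linarith
    exact htne (Prod.ext_iff.mpr ⟨by exact_mod_cast hta, by exact_mod_cast htb⟩)
  -- count: 2d distinct elements of S
  have huinjOn : Set.InjOn um (Finset.range d : Finset ℕ) := by
    intro c hc c' hc' h
    simp only [Finset.coe_range, Set.mem_Iio] at hc hc'
    by_contra hne'
    rcases lt_or_gt_of_ne hne' with hlt | hlt
    · exact uinj c c' hlt hc' h
    · exact uinj c' c hlt hc h.symm
  have hwinjOn : Set.InjOn wm (Finset.range d : Finset ℕ) := by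
    intro c hc c' hc' h
    simp only [Finset.coe_range, Set.mem_Iio] at hc hc'
    by_contra hne'
    rcases lt_or_gt_of_ne hne' with hlt | hlt
    · exact winj c c' hlt hc' h
    · exact winj c' c hlt hc h.symm
  have hucard : ((Finset.range d).image um).card = d := by
    rw [Finset.card_image_of_injOn huinjOn, Finset.card_range]
  have hwcard : ((Finset.range d).image wm).card = d := by
    rw [Finset.card_image_of_injOn hwinjOn, Finset.card_range]
  have hdisj : Disjoint ((Finset.range d).image um) ((Finset.range d).image wm) := by
    rw [Finset.disjoint_left]
    intro x hx hx'
    obtain ⟨c, hc, rfl⟩ := Finset.mem_image.mp hx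
    obtain ⟨c', hc', heq⟩ := Finset.mem_image.mp hx'
    exact cross c c' (Finset.mem_range.mp hc) (Finset.mem_range.mp hc') heq.symm
  have hsub : ((Finset.range d).image um ∪ (Finset.range d).image wm) ⊆ S := by
    intro x hx
    rcases Finset.mem_union.mp hx with hx | hx
    · obtain ⟨c, hc, rfl⟩ := Finset.mem_image.mp hx
      exact humS c (Finset.mem_range.mp hc)
    · obtain ⟨c, hc, rfl⟩ := Finset.mem_image.mp hx
      exact hwmS c (Finset.mem_range.mp hc)
  have hcount : d + d ≤ S.card := by
    have hle := Finset.card_le_card hsub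
    rwa [Finset.card_union_of_disjoint hdisj, hucard, hwcard] at hle
  omega
end

section
/- Let S be a finite set of distinct lines z ↦ a + b·z (a,b ∈ ℕ) with |S| even, and let L₀ = a₀ + b₀·z be a line of S with maximal slope b₀. For c ∈ ℕ define B_c = {f ∈ S : f(c) < a₀ + b₀·c}. If column c and column c+1 are both bad for S (every point on the column lies on an even number of lines from S), then |B_{c+1}| ≥ |B_c| + 2. -/
/-- If every fiber of `v` on `S` has even cardinality, then the sublevel set has
even cardinality. -/
lemma even_filter_lt {α : Type*} [DecidableEq α] (S : Finset α) (v : α → ℤ) (Y : ℤ)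
    (h : ∀ y : ℤ, Even ((S.filter (fun p => v p = y)).card)) :
    Even ((S.filter (fun p => v p < Y)).card) := by
  classical
  set T := (S.filter (fun p => v p < Y)).image v with hT
  have hun : S.filter (fun p => v p < Y) = T.biUnion (fun y => S.filter (fun p => v p = y)) := by
    ext p
    simp only [Finset.mem_biUnion, Finset.mem_filter, hT, Finset.mem_image]
    constructor
    · rintro ⟨hp, hlt⟩
      exact ⟨v p, ⟨p, ⟨hp, hlt⟩, rfl⟩, hp, rfl⟩
    · rintro ⟨y, ⟨q, ⟨hq, hqlt⟩, rfl⟩, hp, hpv⟩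
      exact ⟨hp, hpv ▸ hqlt⟩
  rw [hun, Finset.card_biUnion]
  · rw [even_iff_two_dvd]
    apply Finset.dvd_sum
    intro y _
    exact (h y).two_dvd
  · intro x _ y _ hxy
    apply Finset.disjoint_left.mpr
    intro p hp hp'
    simp only [Finset.mem_filter] at hp hp'
    exact hxy (hp.2 ▸ hp'.2.symm ▸ rfl)

/-- Let S be a set of distinct lines z ↦ a + b·z (keys (a,b) ∈ ℕ²) of even cardinality,
and let (a₀,b₀) ∈ S have maximal slope. If columns c and c+1 are both bad for S (every
point of the column lies on an even number of lines of S), then the set B_c of lines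
strictly below the line a₀ + b₀·z grows by at least 2 from column c to column c+1. -/
theorem stmt_6 (S : Finset (ℕ × ℕ)) (heven : Even S.card)
    (a₀ b₀ : ℕ) (h0 : (a₀, b₀) ∈ S) (hmax : ∀ p ∈ S, p.2 ≤ b₀) (c : ℕ)
    (hbadc : ∀ y : ℤ,
      Even ((S.filter (fun p => (p.1 : ℤ) + (p.2 : ℤ) * (c : ℤ) = y)).card))
    (hbadc1 : ∀ y : ℤ,
      Even ((S.filter (fun p => (p.1 : ℤ) + (p.2 : ℤ) * ((c : ℤ) + 1) = y)).card)) :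
    (S.filter (fun p => (p.1 : ℤ) + (p.2 : ℤ) * (c : ℤ)
        < (a₀ : ℤ) + (b₀ : ℤ) * (c : ℤ))).card + 2
      ≤ (S.filter (fun p => (p.1 : ℤ) + (p.2 : ℤ) * ((c : ℤ) + 1)
        < (a₀ : ℤ) + (b₀ : ℤ) * ((c : ℤ) + 1))).card := by
  classical
  set Bc := S.filter (fun p => (p.1 : ℤ) + (p.2 : ℤ) * (c : ℤ)
      < (a₀ : ℤ) + (b₀ : ℤ) * (c : ℤ)) with hBc
  set Bc1 := S.filter (fun p => (p.1 : ℤ) + (p.2 : ℤ) * ((c : ℤ) + 1)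
      < (a₀ : ℤ) + (b₀ : ℤ) * ((c : ℤ) + 1)) with hBc1
  have hEvenBc : Even Bc.card :=
    even_filter_lt S (fun p => (p.1 : ℤ) + (p.2 : ℤ) * (c : ℤ)) _ hbadc
  have hEvenBc1 : Even Bc1.card :=
    even_filter_lt S (fun p => (p.1 : ℤ) + (p.2 : ℤ) * ((c : ℤ) + 1)) _ hbadc1
  -- Bc ⊆ Bc1
  have hsub : Bc ⊆ Bc1 := by
    intro p hp
    simp only [hBc, hBc1, Finset.mem_filter] at hp ⊢
    refine ⟨hp.1, ?_⟩
    have hb : (p.2 : ℤ) ≤ (b₀ : ℤ) := by exact_mod_cast hmax p hp.1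
    nlinarith [hp.2]
  -- the fiber through (c, a₀+b₀c)
  set E := S.filter (fun p => (p.1 : ℤ) + (p.2 : ℤ) * (c : ℤ) = (a₀ : ℤ) + (b₀ : ℤ) * (c : ℤ))
    with hE
  have h0E : (a₀, b₀) ∈ E := by
    simp [hE, Finset.mem_filter, h0]
  have hEcard : 1 < E.card := by
    have hev := hbadc ((a₀ : ℤ) + (b₀ : ℤ) * (c : ℤ))
    rw [← hE] at hev
    have h1 : 0 < E.card := Finset.card_pos.mpr ⟨_, h0E⟩
    rcases hev with ⟨k, hk⟩
    omega
  obtain ⟨q, hqE, hq⟩ := Finset.exists_mem_ne hEcard (a₀, b₀)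
  simp only [hE, Finset.mem_filter] at hqE
  obtain ⟨hqS, hqeq⟩ := hqE
  -- q has slope < b₀
  have hqslope : (q.2 : ℤ) < (b₀ : ℤ) := by
    have hle : (q.2 : ℤ) ≤ (b₀ : ℤ) := by exact_mod_cast hmax q hqS
    rcases lt_or_eq_of_le hle with h | h
    · exact h
    · exfalso
      have hb2 : q.2 = b₀ := by exact_mod_cast h
      have ha : (q.1 : ℤ) = (a₀ : ℤ) := by rw [hb2] at hqeq; linarith
      have ha' : q.1 = a₀ := by exact_mod_cast ha
      exact hq (Prod.ext ha' hb2)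
  -- q ∈ Bc1 \ Bc
  have hqBc1 : q ∈ Bc1 := by
    simp only [hBc1, Finset.mem_filter]
    refine ⟨hqS, ?_⟩
    have : (q.1 : ℤ) + (q.2 : ℤ) * ((c : ℤ) + 1)
        = (a₀ : ℤ) + (b₀ : ℤ) * (c : ℤ) + (q.2 : ℤ) := by linarith [hqeq]
    rw [this]; ring_nf; nlinarith
  have hqBc : q ∉ Bc := by
    simp only [hBc, Finset.mem_filter]
    rintro ⟨-, hlt⟩
    omega
  have hins : insert q Bc ⊆ Bc1 := by
    intro p hp
    rcases Finset.mem_insert.mp hp with rfl | hp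
    · exact hqBc1
    · exact hsub hp
  have hcard : Bc.card + 1 ≤ Bc1.card := by
    have := Finset.card_le_card hins
    rwa [Finset.card_insert_of_notMem hqBc] at this
  rcases hEvenBc with ⟨m, hm⟩
  rcases hEvenBc1 with ⟨n, hn⟩
  omega
end

section
/- Suppose C is a set of k distinct polynomials of degree at most q−1 with integer coefficients such that each of the columns 0,...,d−1 is bad for C (every point on those columns lies on an even number of curves of C). Let Q be a polynomial of degree q−1 with integer coefficients vanishing at d, d+1, ..., d+q−2, chosen so that C' = {P + Q : P ∈ C} is disjoint from C. Then each of the columns 0,...,d+q−2 is bad for C ∪ C', and |C ∪ C'| = 2k. -/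
/-- If columns 0,...,d−1 are bad for a set C of k polynomials of degree ≤ q−1 over ℤ, and
Q is a polynomial of degree q−1 vanishing at d,...,d+q−2 such that C' = {P + Q : P ∈ C}
is disjoint from C, then C ∪ C' has 2k elements and columns 0,...,d+q−2 are bad for it. -/
theorem stmt_8 (q d k : ℕ) (hq : 2 ≤ q) (hd : 1 ≤ d)
    (C : Finset (Polynomial ℤ)) (hcard : C.card = k)
    (hdeg : ∀ P ∈ C, P.natDegree ≤ q - 1)
    (hbad : ∀ c : ℤ, 0 ≤ c → c ≤ (d : ℤ) - 1 → ∀ y : ℤ,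
      Even ((C.filter (fun P => P.eval c = y)).card))
    (Q : Polynomial ℤ) (hQdeg : Q.natDegree = q - 1)
    (hQzero : ∀ i : ℕ, i < q - 1 → Q.eval ((d : ℤ) + (i : ℤ)) = 0)
    (hdisj : Disjoint C (C.image (fun P => P + Q))) :
    (C ∪ C.image (fun P => P + Q)).card = 2 * k ∧
    ∀ c : ℤ, 0 ≤ c → c ≤ (d : ℤ) + (q : ℤ) - 2 → ∀ y : ℤ,
      Even (((C ∪ C.image (fun P => P + Q)).filter (fun P => P.eval c = y)).card) := by
  have hinj : Function.Injective (fun P : Polynomial ℤ => P + Q) :=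
    add_left_injective Q
  constructor
  · rw [Finset.card_union_of_disjoint hdisj, Finset.card_image_of_injective _ hinj, hcard]
    ring
  · intro c hc0 hc y
    rw [Finset.filter_union, Finset.card_union_of_disjoint
      (Finset.disjoint_filter_filter hdisj)]
    have himg : ((C.image (fun P => P + Q)).filter (fun P => P.eval c = y)).card
        = (C.filter (fun P => P.eval c = y - Q.eval c)).card := by
      rw [Finset.filter_image, Finset.card_image_of_injective _ hinj]
      congr 1
      ext P
      simp only [Function.comp_apply, Polynomial.eval_add, eq_sub_iff_add_eq]
    rw [himg]
    by_cases hcd : c ≤ (d : ℤ) - 1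
    · exact (hbad c hc0 hcd y).add (hbad c hc0 hcd _)
    · obtain ⟨i, hi⟩ : ∃ i : ℕ, c = (d : ℤ) + i := ⟨(c - d).toNat, by omega⟩
      have hQ0 : Q.eval c = 0 := by
        rw [hi]; exact hQzero i (by push_neg at hcd; omega)
      rw [hQ0, sub_zero]
      exact Even.add_self _
end

section
/- For every d ≥ 1 there exists a set S of 2^d distinct keys (a,b) with a, b ∈ [n], where n = max{2^{d−1}(d−2)+2, 3}, such that for every c ∈ {0,...,d−1} and every y ∈ ℤ, the number of keys (a,b) ∈ S with a + b·c = y is even. Consequently, there exists a bad (2,d,2^d)-arrangement over [n]². -/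
open Finset

private def ww : ℕ → ℕ
  | 0 => 1
  | (i+1) => 2^i

private lemma sumA : ∀ m : ℕ, (∑ j ∈ Finset.range (m+2), j * ww j) + 2^(m+1) = (m+1)*2^(m+1)+1 := by
  intro m
  induction m with
  | zero => decide
  | succ k ih =>
      rw [Finset.sum_range_succ]
      show (∑ j ∈ Finset.range (k+2), j * ww j) + (k+2) * 2^(k+1) + 2^(k+2) = _
      zify at ih ⊢
      linear_combination ih

private lemma sumW : ∀ m : ℕ, (∑ j ∈ Finset.range (m+1), ww j) = 2^m := by
  intro m
  induction m with
  | zero => decide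
  | succ k ih =>
      rw [Finset.sum_range_succ, ih]
      show 2^k + 2^k = 2^(k+1)
      ring

private lemma sup : ∀ m : ℕ, 1 ≤ m → (∑ j ∈ Finset.range m, j * ww j) < m * ww m := by
  intro m hm
  match m, hm with
  | 1, _ => decide
  | (k+2), _ =>
      have h := sumA k
      show _ < (k+2) * 2^(k+1)
      have h3 : 0 < (2:ℕ)^(k+1) := Nat.pow_pos (by norm_num)
      nlinarith

private lemma si : ∀ n (U V : Finset ℕ), U ⊆ Finset.range n → V ⊆ Finset.range n →
    (∑ j ∈ U, j * ww j) = (∑ j ∈ V, j * ww j) → U.erase 0 = V.erase 0 := by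
  intro n
  induction n with
  | zero =>
      intro U V hU hV _
      simp only [Finset.range_zero, Finset.subset_empty] at hU hV
      rw [hU, hV]
  | succ n ih =>
      intro U V hU hV hsum
      rcases Nat.eq_zero_or_pos n with rfl | hn
      · -- U, V ⊆ {0}
        have h1 : ∀ W : Finset ℕ, W ⊆ Finset.range 1 → W.erase 0 = ∅ := by
          intro W hW
          apply Finset.eq_empty_of_forall_notMem
          intro j hj
          have h2 := Finset.mem_erase.1 hj
          have := hW h2.2
          simp only [Finset.mem_range] at this
          omega
        rw [h1 U hU, h1 V hV]
      · by_cases hnU : n ∈ U <;> by_cases hnV : n ∈ V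
        · -- both contain n
          have e1 : (∑ j ∈ U.erase n, j * ww j) + n * ww n = ∑ j ∈ U, j * ww j :=
            Finset.sum_erase_add U _ hnU
          have e2 : (∑ j ∈ V.erase n, j * ww j) + n * ww n = ∑ j ∈ V, j * ww j :=
            Finset.sum_erase_add V _ hnV
          have hsum' : (∑ j ∈ U.erase n, j * ww j) = ∑ j ∈ V.erase n, j * ww j := by omega
          have key := ih (U.erase n) (V.erase n)
            (fun j hj => by
              have := hU (Finset.mem_of_mem_erase hj)
              simp only [Finset.mem_range] at *
              have := (Finset.mem_erase.1 hj).1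
              omega)
            (fun j hj => by
              have := hV (Finset.mem_of_mem_erase hj)
              simp only [Finset.mem_range] at *
              have := (Finset.mem_erase.1 hj).1
              omega)
            hsum'
          have hn0 : n ≠ 0 := by omega
          ext j
          rcases eq_or_ne j n with rfl | hjn
          · simp [Finset.mem_erase, hnU, hnV, hn0]
          · constructor <;> intro hj
            · have : j ∈ (U.erase n).erase 0 := by
                simp only [Finset.mem_erase] at hj ⊢
                exact ⟨hj.1, hjn, hj.2⟩
              rw [key] at this
              simp only [Finset.mem_erase] at this ⊢
              exact ⟨this.1, this.2.2⟩
            · have : j ∈ (V.erase n).erase 0 := by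
                simp only [Finset.mem_erase] at hj ⊢
                exact ⟨hj.1, hjn, hj.2⟩
              rw [← key] at this
              simp only [Finset.mem_erase] at this ⊢
              exact ⟨this.1, this.2.2⟩
        · -- n ∈ U, n ∉ V : contradiction
          exfalso
          have h1 : n * ww n ≤ ∑ j ∈ U, j * ww j :=
            Finset.single_le_sum (f := fun j => j * ww j) (fun i _ => Nat.zero_le _) hnU
          have h2 : (∑ j ∈ V, j * ww j) ≤ ∑ j ∈ Finset.range n, j * ww j := by
            apply Finset.sum_le_sum_of_subset
            intro j hj
            have := hV hj
            simp only [Finset.mem_range] at *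
            rcases Nat.lt_succ_iff_lt_or_eq.1 this with h | rfl
            · exact h
            · exact absurd hj hnV
          have := sup n hn
          omega
        · exfalso
          have h1 : n * ww n ≤ ∑ j ∈ V, j * ww j :=
            Finset.single_le_sum (f := fun j => j * ww j) (fun i _ => Nat.zero_le _) hnV
          have h2 : (∑ j ∈ U, j * ww j) ≤ ∑ j ∈ Finset.range n, j * ww j := by
            apply Finset.sum_le_sum_of_subset
            intro j hj
            have := hU hj
            simp only [Finset.mem_range] at *
            rcases Nat.lt_succ_iff_lt_or_eq.1 this with h | rfl
            · exact h
            · exact absurd hj hnU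
          have := sup n hn
          omega
        · exact ih U V
            (fun j hj => by
              have := hU hj; simp only [Finset.mem_range] at *
              rcases Nat.lt_succ_iff_lt_or_eq.1 this with h | rfl
              · exact h
              · exact absurd hj hnU)
            (fun j hj => by
              have := hV hj; simp only [Finset.mem_range] at *
              rcases Nat.lt_succ_iff_lt_or_eq.1 this with h | rfl
              · exact h
              · exact absurd hj hnV)
            hsum

private lemma keystep (d c : ℕ) (hc : c < d) (T : Finset ℕ) (hT : T ⊆ Finset.range d)
    (hcT : c ∈ T) :
    (∑ j ∈ T, j * ww j) = (∑ j ∈ T.erase c, j * ww j) + c * ww c ∧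
    (∑ j ∈ Finset.range d \ T.erase c, ww j) = ww c + ∑ j ∈ Finset.range d \ T, ww j := by
  constructor
  · exact (Finset.sum_erase_add T _ hcT).symm
  · have hset : Finset.range d \ T.erase c = insert c (Finset.range d \ T) := by
      ext j
      simp only [Finset.mem_sdiff, Finset.mem_erase, Finset.mem_insert, Finset.mem_range]
      constructor
      · rintro ⟨hj, hj2⟩
        by_cases hjc : j = c
        · exact Or.inl hjc
        · exact Or.inr ⟨hj, fun hjT => hj2 ⟨hjc, hjT⟩⟩
      · rintro (rfl | ⟨hj, hj2⟩)
        · exact ⟨hc, fun h => h.1 rfl⟩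
        · exact ⟨hj, fun h => hj2 h.2⟩
    rw [hset, Finset.sum_insert]
    simp only [Finset.mem_sdiff]
    exact fun h => h.2 hcT

/-- For every d ≥ 1 there is a bad (2,d,2^d)-arrangement over [n]² with
n = max(2^{d−1}(d−2)+2, 3): a set of 2^d distinct keys (a,b) with a,b < n such that for
every column c ∈ {0,...,d−1} and every y, an even number of the lines z ↦ a + b·z of the
set pass through (c,y). -/
theorem stmt_10 (d : ℕ) (hd : 1 ≤ d) :
    ∃ S : Finset (ℕ × ℕ), S.card = 2 ^ d ∧
      (∀ p ∈ S, p.1 < max (2 ^ (d - 1) * (d - 2) + 2) 3 ∧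
        p.2 < max (2 ^ (d - 1) * (d - 2) + 2) 3) ∧
      ∀ c : ℕ, c < d → ∀ y : ℤ,
        Even ((S.filter (fun p => (p.1 : ℤ) + (p.2 : ℤ) * (c : ℤ) = y)).card) := by
  classical
  set n : ℕ := max (2 ^ (d - 1) * (d - 2) + 2) 3 with hn
  set keyf : Finset ℕ → ℕ × ℕ :=
    fun T => (∑ j ∈ T, j * ww j, ∑ j ∈ Finset.range d \ T, ww j) with hkeyf
  set F : Finset (Finset ℕ) := (Finset.range d).powerset with hF
  have hinj : ∀ T ∈ F, ∀ T' ∈ F, keyf T = keyf T' → T = T' := by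
    intro T hT T' hT' h
    have hTs : T ⊆ Finset.range d := Finset.mem_powerset.1 hT
    have hT's : T' ⊆ Finset.range d := Finset.mem_powerset.1 hT'
    have h1 : (∑ j ∈ T, j * ww j) = ∑ j ∈ T', j * ww j := congrArg Prod.fst h
    have h2 : (∑ j ∈ Finset.range d \ T, ww j) = ∑ j ∈ Finset.range d \ T', ww j :=
      congrArg Prod.snd h
    have he : T.erase 0 = T'.erase 0 := si d T T' hTs hT's h1
    -- membership agrees away from 0
    have hagree : ∀ j : ℕ, j ≠ 0 → (j ∈ T ↔ j ∈ T') := by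
      intro j hj
      constructor <;> intro hjm
      · have : j ∈ T.erase 0 := Finset.mem_erase.2 ⟨hj, hjm⟩
        rw [he] at this; exact (Finset.mem_erase.1 this).2
      · have : j ∈ T'.erase 0 := Finset.mem_erase.2 ⟨hj, hjm⟩
        rw [← he] at this; exact (Finset.mem_erase.1 this).2
    have h0 : (0 ∈ T) ↔ (0 ∈ T') := by
      by_contra hcon
      -- WLOG-style: in either mixed case we derive a contradiction from h2
      have key : ∀ A B : Finset ℕ, A ⊆ Finset.range d → B ⊆ Finset.range d →
          (∀ j : ℕ, j ≠ 0 → (j ∈ A ↔ j ∈ B)) → 0 ∈ A → 0 ∉ B →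
          (∑ j ∈ Finset.range d \ A, ww j) ≠ ∑ j ∈ Finset.range d \ B, ww j := by
        intro A B hA hB hAB h0A h0B
        have hset : Finset.range d \ B = insert 0 (Finset.range d \ A) := by
          ext j
          simp only [Finset.mem_sdiff, Finset.mem_insert, Finset.mem_range]
          constructor
          · rintro ⟨hj, hj2⟩
            rcases eq_or_ne j 0 with rfl | hj0
            · exact Or.inl rfl
            · exact Or.inr ⟨hj, fun hjm => hj2 ((hAB j hj0).1 hjm)⟩
          · rintro (rfl | ⟨hj, hj2⟩)
            · exact ⟨by omega, h0B⟩
            · rcases eq_or_ne j 0 with rfl | hj0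
              · exact ⟨hj, h0B⟩
              · exact ⟨hj, fun hjm => hj2 ((hAB j hj0).2 hjm)⟩
        rw [hset, Finset.sum_insert (by simp [Finset.mem_sdiff, h0A])]
        have : ww 0 = 1 := rfl
        omega
      rcases Decidable.em (0 ∈ T) with h0T | h0T
      · have h0T' : 0 ∉ T' := fun h => hcon ⟨fun _ => h, fun _ => h0T⟩
        exact key T T' hTs hT's hagree h0T h0T' h2
      · have h0T' : 0 ∈ T' := by
          by_contra h'
          exact hcon ⟨fun h => absurd h h0T, fun h => absurd h h'⟩
        exact (key T' T hT's hTs (fun j hj => (hagree j hj).symm) h0T' h0T) h2.symm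
    ext j
    rcases eq_or_ne j 0 with rfl | hj
    · exact h0
    · exact hagree j hj
  refine ⟨F.image keyf, ?_, ?_, ?_⟩
  · rw [Finset.card_image_of_injOn (fun a ha b hb => hinj a ha b hb), hF,
      Finset.card_powerset, Finset.card_range]
  · intro p hp
    obtain ⟨T, hT, rfl⟩ := Finset.mem_image.1 hp
    have hTs : T ⊆ Finset.range d := Finset.mem_powerset.1 hT
    constructor
    · -- a bound
      have hle : (∑ j ∈ T, j * ww j) ≤ ∑ j ∈ Finset.range d, j * ww j :=
        Finset.sum_le_sum_of_subset hTs
      have hbound : (∑ j ∈ Finset.range d, j * ww j) < n := by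
        match d, hd with
        | 1, _ =>
            have : (∑ j ∈ Finset.range 1, j * ww j) = 0 := by decide
            rw [this]; exact lt_of_lt_of_le (by norm_num) (le_max_right _ _)
        | (m+2), _ =>
            have h := sumA m
            have h1 : (m+2) - 1 = m+1 := by omega
            have h2 : (m+2) - 2 = m := by omega
            have h3 : 2 ^ (m+2-1) * (m+2-2) + 2 ≤ n := by rw [hn]; exact le_max_left _ _
            rw [h1, h2] at h3
            have h4 : (m+1)*2^(m+1) = 2^(m+1)*m + 2^(m+1) := by ring
            omega
      exact lt_of_le_of_lt hle hbound
    · -- b bound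
      have hle : (∑ j ∈ Finset.range d \ T, ww j) ≤ ∑ j ∈ Finset.range d, ww j :=
        Finset.sum_le_sum_of_subset (Finset.sdiff_subset)
      have hW : (∑ j ∈ Finset.range d, ww j) = 2^(d-1) := by
        obtain ⟨m, rfl⟩ : ∃ m, d = m + 1 := ⟨d - 1, by omega⟩
        rw [show m + 1 - 1 = m from rfl]
        exact sumW m
      have hbound : (2:ℕ)^(d-1) < n := by
        rcases le_or_gt d 2 with h | h
        · have : (2:ℕ)^(d-1) < 3 := by
            interval_cases d <;> norm_num
          exact lt_of_lt_of_le this (le_max_right _ _)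
        · have h3 : 2 ^ (d-1) * (d-2) + 2 ≤ n := le_max_left _ _
          have h4 : 2^(d-1) ≤ 2^(d-1)*(d-2) := Nat.le_mul_of_pos_right _ (by omega)
          omega
      rw [hW] at hle
      exact lt_of_le_of_lt hle hbound
  · intro c hc y
    set P : ℕ × ℕ → Prop := fun p => (p.1 : ℤ) + (p.2 : ℤ) * (c : ℤ) = y with hP
    have himg : ((F.image keyf).filter P).card = (F.filter (fun T => P (keyf T))).card := by
      rw [Finset.filter_image]
      exact Finset.card_image_of_injOn (fun a ha b hb =>
        hinj a (Finset.mem_of_mem_filter a ha) b (Finset.mem_of_mem_filter b hb))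
    rw [himg]
    set G : Finset (Finset ℕ) := F.filter (fun T => P (keyf T)) with hG
    have hsplit : (G.filter (fun T => c ∈ T)).card + (G.filter (fun T => c ∉ T)).card
        = G.card := Finset.card_filter_add_card_filter_not _
    have hbij : (G.filter (fun T => c ∈ T)).card = (G.filter (fun T => c ∉ T)).card := by
      refine Finset.card_bij' (fun T _ => T.erase c) (fun T _ => insert c T) ?_ ?_ ?_ ?_
      · -- maps into target
        intro T hTm
        simp only [hG, Finset.mem_filter] at hTm ⊢
        obtain ⟨⟨hTF, hTP⟩, hcT⟩ := hTm
        have hTs : T ⊆ Finset.range d := Finset.mem_powerset.1 hTF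
        obtain ⟨ka, kb⟩ := keystep d c hc T hTs hcT
        refine ⟨⟨Finset.mem_powerset.2 ((Finset.erase_subset _ _).trans hTs), ?_⟩,
          Finset.notMem_erase _ _⟩
        simp only [hP, hkeyf] at hTP ⊢
        rw [kb]
        rw [ka] at hTP
        push_cast at hTP ⊢
        linarith
      · -- reverse maps into source
        intro T hTm
        simp only [hG, Finset.mem_filter] at hTm ⊢
        obtain ⟨⟨hTF, hTP⟩, hcT⟩ := hTm
        have hTs : T ⊆ Finset.range d := Finset.mem_powerset.1 hTF
        have hsub : insert c T ⊆ Finset.range d :=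
          Finset.insert_subset (Finset.mem_range.2 hc) hTs
        have hcT' : c ∈ insert c T := Finset.mem_insert_self _ _
        obtain ⟨ka, kb⟩ := keystep d c hc (insert c T) hsub hcT'
        have herase : (insert c T).erase c = T := Finset.erase_insert hcT
        rw [herase] at ka kb
        refine ⟨⟨Finset.mem_powerset.2 hsub, ?_⟩, hcT'⟩
        simp only [hP, hkeyf] at hTP ⊢
        rw [kb] at hTP
        rw [ka]
        push_cast at hTP ⊢
        linarith
      · intro T hTm
        simp only [hG, Finset.mem_filter] at hTm
        exact Finset.insert_erase hTm.2
      · intro T hTm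
        simp only [hG, Finset.mem_filter] at hTm
        exact Finset.erase_insert hTm.2
    refine ⟨(G.filter (fun T => c ∈ T)).card, ?_⟩
    omega
end

section
/- Let C be a set of k distinct polynomials of degree at most q−1 (integer coefficients) such that columns 0,...,q−1 are all bad for C. Then for each column c ∈ {0,...,q−1} there exist at least k/2 intersections on column c (a partition of C into pairs agreeing at c), and additionally there exist at least ⌈k/4⌉ further intersection points (pairs of distinct curves agreeing at some real point) each located either strictly between consecutive integer columns in [0, q−1] or on a column other than the last, and distinct from the chosen k/2 per-column intersections. -/
open Polynomial Finset

section Helpers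
variable {α : Type*}

lemma even_card_of_invol (f : α → α) :
    ∀ (A : Finset α), (∀ x ∈ A, f x ∈ A) → (∀ x ∈ A, f (f x) = x) → (∀ x ∈ A, f x ≠ x) →
    Even A.card := by
  classical
  intro A
  induction A using Finset.strongInduction with
  | _ A ih =>
    intro h1 h2 h3
    rcases A.eq_empty_or_nonempty with rfl | ⟨x, hx⟩
    · simp
    · have hfx : f x ∈ A := h1 x hx
      have hne : f x ≠ x := h3 x hx
      set A' := (A.erase x).erase (f x) with hA'
      have hmem : ∀ y, y ∈ A' ↔ y ∈ A ∧ y ≠ x ∧ y ≠ f x := by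
        intro y
        simp only [hA', Finset.mem_erase]
        tauto
      have hsub : A' ⊂ A := by
        refine Finset.ssubset_iff_of_subset ?_ |>.mpr ⟨x, hx, ?_⟩
        · intro y hy; exact ((hmem y).mp hy).1
        · intro hxA'; exact ((hmem x).mp hxA').2.1 rfl
      have hEven : Even A'.card := by
        refine ih A' hsub ?_ ?_ ?_
        · intro y hy
          obtain ⟨hyA, hy1, hy2⟩ := (hmem y).mp hy
          refine (hmem (f y)).mpr ⟨h1 y hyA, ?_, ?_⟩
          · intro hfy; apply hy2; rw [← h2 y hyA, hfy]
          · intro hfy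
            have : f (f y) = f (f x) := by rw [hfy]
            rw [h2 y hyA, h2 x hx] at this
            exact hy1 this
        · intro y hy; exact h2 y (((hmem y).mp hy).1)
        · intro y hy; exact h3 y (((hmem y).mp hy).1)
      have hcard2 : 2 ≤ A.card := Finset.one_lt_card.mpr ⟨f x, hfx, x, hx, hne⟩
      have hc : A'.card = A.card - 2 := by
        have h1' : (A.erase x).card = A.card - 1 := Finset.card_erase_of_mem hx
        have hfx' : f x ∈ A.erase x := Finset.mem_erase.mpr ⟨hne, hfx⟩
        have h2' : A'.card = (A.erase x).card - 1 := Finset.card_erase_of_mem hfx'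
        omega
      rw [Nat.even_iff] at hEven ⊢
      omega

lemma exists_pairing (v : α → ℤ) :
    ∀ (s : Finset α), (∀ y : ℤ, Even ((s.filter fun x => v x = y).card)) →
    ∃ f : α → α, (∀ x, x ∉ s → f x = x) ∧
      ∀ x ∈ s, f x ∈ s ∧ f x ≠ x ∧ f (f x) = x ∧ v (f x) = v x := by
  classical
  intro s
  induction s using Finset.strongInduction with
  | _ s ih =>
    intro hev
    rcases s.eq_empty_or_nonempty with rfl | ⟨x₀, hx₀⟩
    · exact ⟨id, fun x _ => rfl, by simp⟩
    · have hx₀f : x₀ ∈ s.filter fun x => v x = v x₀ := by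
        simp [Finset.mem_filter, hx₀]
      have h2 : 2 ≤ (s.filter fun x => v x = v x₀).card := by
        have := hev (v x₀)
        have h1 : 1 ≤ (s.filter fun x => v x = v x₀).card :=
          Finset.card_pos.mpr ⟨x₀, hx₀f⟩
        rw [Nat.even_iff] at this; omega
      obtain ⟨y₀, hy₀f, hy₀ne⟩ := Finset.exists_mem_ne
        (show 1 < (s.filter fun x => v x = v x₀).card by omega) x₀
      obtain ⟨hy₀s, hy₀v⟩ := Finset.mem_filter.mp hy₀f
      set s' := (s.erase x₀).erase y₀ with hs'
      have hmem : ∀ y, y ∈ s' ↔ y ∈ s ∧ y ≠ x₀ ∧ y ≠ y₀ := by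
        intro y; simp only [hs', Finset.mem_erase]; tauto
      have hsub : s' ⊂ s := by
        refine Finset.ssubset_iff_of_subset ?_ |>.mpr ⟨x₀, hx₀, ?_⟩
        · intro y hy; exact ((hmem y).mp hy).1
        · intro h; exact ((hmem x₀).mp h).2.1 rfl
      have hev' : ∀ y : ℤ, Even ((s'.filter fun x => v x = y).card) := by
        intro y
        rw [hs', Finset.filter_erase, Finset.filter_erase]
        by_cases hy : y = v x₀
        · subst hy
          have hx₀m : x₀ ∈ (s.filter fun x => v x = v x₀) := hx₀f
          have hy₀m : y₀ ∈ (s.filter fun x => v x = v x₀).erase x₀ :=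
            Finset.mem_erase.mpr ⟨hy₀ne, hy₀f⟩
          rw [Finset.card_erase_of_mem hy₀m, Finset.card_erase_of_mem hx₀m]
          have := hev (v x₀)
          rw [Nat.even_iff] at this ⊢
          omega
        · have hx₀m : x₀ ∉ (s.filter fun x => v x = y) := by
            simp only [Finset.mem_filter]; tauto
          have hy₀m : y₀ ∉ (s.filter fun x => v x = y) := by
            simp only [Finset.mem_filter]
            rintro ⟨-, h⟩; rw [hy₀v] at h; exact hy h.symm
          rw [Finset.erase_eq_of_notMem hx₀m, Finset.erase_eq_of_notMem hy₀m]
          exact hev y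
      obtain ⟨f', hf'out, hf'⟩ := ih s' hsub hev'
      refine ⟨fun z => if z = x₀ then y₀ else if z = y₀ then x₀ else f' z, ?_, ?_⟩
      · intro x hxs
        have hne1 : x ≠ x₀ := fun h => hxs (h ▸ hx₀)
        have hne2 : x ≠ y₀ := fun h => hxs (h ▸ hy₀s)
        simp only [if_neg hne1, if_neg hne2]
        exact hf'out x (fun h => hxs (((hmem x).mp h).1))
      · intro x hxs
        dsimp only
        by_cases h1 : x = x₀
        · subst h1
          rw [if_pos rfl]
          refine ⟨hy₀s, hy₀ne, ?_, hy₀v⟩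
          rw [if_neg hy₀ne, if_pos rfl]
        · by_cases h2 : x = y₀
          · subst h2
            rw [if_neg h1, if_pos rfl]
            exact ⟨hx₀, Ne.symm h1, by rw [if_pos rfl], hy₀v.symm⟩
          · have hxs' : x ∈ s' := (hmem x).mpr ⟨hxs, h1, h2⟩
            obtain ⟨hm, hn, hi, hv⟩ := hf' x hxs'
            have hm1 : f' x ≠ x₀ := fun h => ((hmem (f' x)).mp hm).2.1 h
            have hm2 : f' x ≠ y₀ := fun h => ((hmem (f' x)).mp hm).2.2 h
            rw [if_neg h1, if_neg h2, if_neg hm1, if_neg hm2]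
            exact ⟨((hmem (f' x)).mp hm).1, hn, hi, hv⟩

end Helpers

section Helpers2
variable {α : Type*}

/-- Copying version: build a new pairing for value `v`, keeping the pairs of the previous
involution `g` whenever they still share the same `v`-value. -/
lemma exists_pairing_copy (v : α → ℤ) (s : Finset α) (g : α → α)
    (hg : ∀ x ∈ s, g x ∈ s ∧ g x ≠ x ∧ g (g x) = x)
    (hev : ∀ y : ℤ, Even ((s.filter fun x => v x = y).card)) :
    ∃ f : α → α,
      (∀ x ∈ s, f x ∈ s ∧ f x ≠ x ∧ f (f x) = x ∧ v (f x) = v x) ∧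
      (∀ x ∈ s, v (g x) = v x → f x = g x) := by
  classical
  set D := s.filter (fun x => v (g x) = v x) with hD
  have hDmem : ∀ x, x ∈ D ↔ x ∈ s ∧ v (g x) = v x := by
    intro x; simp [hD]
  have hgD : ∀ x ∈ D, g x ∈ D := by
    intro x hx
    obtain ⟨hxs, hxv⟩ := (hDmem x).mp hx
    obtain ⟨h1, h2, h3⟩ := hg x hxs
    exact (hDmem (g x)).mpr ⟨h1, by rw [h3, hxv]⟩
  set s₂ := s \ D with hs₂
  have hs₂mem : ∀ x, x ∈ s₂ ↔ x ∈ s ∧ ¬ v (g x) = v x := by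
    intro x; simp [hs₂, hD, Finset.mem_sdiff]; tauto
  have hev₂ : ∀ y : ℤ, Even ((s₂.filter fun x => v x = y).card) := by
    intro y
    have hsplit : (s.filter fun x => v x = y) =
        (D.filter fun x => v x = y) ∪ (s₂.filter fun x => v x = y) := by
      ext x
      simp only [Finset.mem_filter, Finset.mem_union, hDmem, hs₂mem]
      tauto
    have hdisj : Disjoint (D.filter fun x => v x = y) (s₂.filter fun x => v x = y) := by
      rw [Finset.disjoint_left]
      intro x hx hx'
      exact ((hs₂mem x).mp (Finset.mem_filter.mp hx').1).2
        ((hDmem x).mp (Finset.mem_filter.mp hx).1).2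
    have hDev : Even ((D.filter fun x => v x = y).card) := by
      refine even_card_of_invol g _ ?_ ?_ ?_
      · intro x hx
        obtain ⟨hxD, hxy⟩ := Finset.mem_filter.mp hx
        refine Finset.mem_filter.mpr ⟨hgD x hxD, ?_⟩
        rw [((hDmem x).mp hxD).2, hxy]
      · intro x hx
        exact (hg x ((hDmem x).mp (Finset.mem_filter.mp hx).1).1).2.2
      · intro x hx
        exact (hg x ((hDmem x).mp (Finset.mem_filter.mp hx).1).1).2.1
    have := hev y
    rw [hsplit, Finset.card_union_of_disjoint hdisj] at this
    rw [Nat.even_iff] at this hDev ⊢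
    omega
  obtain ⟨f₂, hf₂out, hf₂⟩ := exists_pairing v s₂ hev₂
  refine ⟨fun z => if z ∈ D then g z else f₂ z, ?_, ?_⟩
  · intro x hxs
    dsimp only
    by_cases hxD : x ∈ D
    · rw [if_pos hxD]
      obtain ⟨h1, h2, h3⟩ := hg x hxs
      have hgxD : g x ∈ D := hgD x hxD
      rw [if_pos hgxD]
      exact ⟨h1, h2, h3, ((hDmem x).mp hxD).2⟩
    · have hxs₂ : x ∈ s₂ := (hs₂mem x).mpr ⟨hxs, fun h => hxD ((hDmem x).mpr ⟨hxs, h⟩)⟩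
      rw [if_neg hxD]
      obtain ⟨h1, h2, h3, h4⟩ := hf₂ x hxs₂
      have hf₂xD : f₂ x ∉ D := by
        intro h
        have := ((hs₂mem (f₂ x)).mp h1).1
        have h' := ((hDmem (f₂ x)).mp h).2
        exact ((hs₂mem (f₂ x)).mp h1).2 h'
      rw [if_neg hf₂xD]
      exact ⟨((hs₂mem (f₂ x)).mp h1).1, h2, h3, h4⟩
  · intro x hxs hxv
    dsimp only
    rw [if_pos ((hDmem x).mpr ⟨hxs, hxv⟩)]

end Helpers2

section Core
variable {α : Type*} [LinearOrder α]

/-- Core counting lemma: with a value-preserving fixed-point-free involution `l` at the left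
column and `r` at the right column, satisfying the copying condition, the number of elements
whose partner changes is at most 4 times the number of "credit" pairs (unmatched left ties or
strictly order-reversed pairs). -/
lemma core_lemma (S : Finset α) (v₀ v₁ : α → ℤ) (l r : α → α)
    (W : Finset (α × α))
    (hl : ∀ x ∈ S, l x ∈ S ∧ l x ≠ x ∧ l (l x) = x ∧ v₀ (l x) = v₀ x)
    (hr : ∀ x ∈ S, r x ∈ S ∧ r x ≠ x ∧ r (r x) = x ∧ v₁ (r x) = v₁ x)
    (hc : ∀ x ∈ S, v₁ (l x) = v₁ x → r x = l x)
    (hWmem : ∀ p q : α, p ∈ S → q ∈ S → p < q →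
      ((v₀ p = v₀ q ∧ l p ≠ q) ∨
       (v₀ p < v₀ q ∧ v₁ q < v₁ p) ∨
       (v₀ q < v₀ p ∧ v₁ p < v₁ q)) → (p, q) ∈ W)
    (Ch : Finset α) (hChdef : ∀ x, x ∈ Ch ↔ (x ∈ S ∧ l x ≠ r x)) :
    Ch.card ≤ 4 * W.card := by
  classical
  have hChS : ∀ x ∈ Ch, x ∈ S := fun x hx => ((hChdef x).mp hx).1
  have hChne : ∀ x ∈ Ch, l x ≠ r x := fun x hx => ((hChdef x).mp hx).2
  have hChl : ∀ x ∈ Ch, l x ∈ Ch := by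
    intro x hx
    have hxS := hChS x hx
    obtain ⟨hlS, hlne, hll, hlv⟩ := hl x hxS
    refine (hChdef (l x)).mpr ⟨hlS, ?_⟩
    intro heq
    -- l (l x) = r (l x), i.e. x = r (l x)
    rw [hll] at heq
    have : r x = l x := by
      have := congrArg r heq
      rw [(hr (l x) hlS).2.2.1] at this
      exact this
    exact hChne x hx this.symm
  have hv₁ne : ∀ x ∈ Ch, v₁ (l x) ≠ v₁ x := by
    intro x hx h
    exact hChne x hx (hc x (hChS x hx) h).symm
  set E := Ch.filter (fun x => v₁ (l x) < v₁ x) with hE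
  -- |Ch| = 2 |E|
  have hChsplit : Ch = E ∪ E.image l := by
    ext x
    simp only [hE, Finset.mem_union, Finset.mem_filter, Finset.mem_image]
    constructor
    · intro hx
      rcases lt_or_gt_of_ne (hv₁ne x hx) with h | h
      · exact Or.inl ⟨hx, h⟩
      · refine Or.inr ⟨l x, ⟨hChl x hx, ?_⟩, (hl x (hChS x hx)).2.2.1⟩
        rw [(hl x (hChS x hx)).2.2.1]
        exact h
    · rintro (⟨hx, -⟩ | ⟨y, ⟨hy, -⟩, rfl⟩)
      · exact hx
      · exact hChl y hy
  have hdisjE : Disjoint E (E.image l) := by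
    rw [Finset.disjoint_left]
    rintro x hxE hxim
    obtain ⟨y, hyE, rfl⟩ := Finset.mem_image.mp hxim
    obtain ⟨hyCh, hyv⟩ := Finset.mem_filter.mp hyE
    obtain ⟨hlyCh, hlyv⟩ := Finset.mem_filter.mp hxE
    rw [(hl y (hChS y hyCh)).2.2.1] at hlyv
    exact absurd hyv (not_lt.mpr (le_of_lt hlyv))
  have hinjE : Set.InjOn l ↑E := by
    intro a ha b hb hab
    have := congrArg l hab
    rw [(hl a (hChS a (Finset.mem_filter.mp ha).1)).2.2.1,
        (hl b (hChS b (Finset.mem_filter.mp hb).1)).2.2.1] at this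
    exact this
  have hcard2 : Ch.card = 2 * E.card := by
    rw [hChsplit, Finset.card_union_of_disjoint hdisjE, Finset.card_image_of_injOn hinjE]
    omega
  -- parity: for each edge top x, there is another edge crossing the level just below v₁ x
  have key : ∀ x ∈ E, ∃ x', x' ∈ S ∧ x' ≠ x ∧ v₁ (l x') < v₁ x ∧ v₁ x ≤ v₁ x' := by
    intro x hxE
    obtain ⟨hxCh, hxv⟩ := Finset.mem_filter.mp hxE
    have hxS := hChS x hxCh
    set A := S.filter (fun y => v₁ x ≤ v₁ y) with hA
    have hAS : ∀ y ∈ A, y ∈ S := fun y hy => (Finset.mem_filter.mp hy).1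
    have hAev : Even A.card := by
      refine even_card_of_invol r A ?_ ?_ ?_
      · intro y hy
        obtain ⟨hyS, hyv⟩ := Finset.mem_filter.mp hy
        exact Finset.mem_filter.mpr ⟨(hr y hyS).1, by rw [(hr y hyS).2.2.2]; exact hyv⟩
      · intro y hy; exact (hr y (hAS y hy)).2.2.1
      · intro y hy; exact (hr y (hAS y hy)).2.1
    set K := A.filter (fun y => v₁ x ≤ v₁ (l y)) with hK
    have hKev : Even K.card := by
      refine even_card_of_invol l K ?_ ?_ ?_
      · intro y hy
        obtain ⟨hyA, hyv⟩ := Finset.mem_filter.mp hy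
        obtain ⟨hyS, hyv'⟩ := Finset.mem_filter.mp hyA
        refine Finset.mem_filter.mpr ⟨Finset.mem_filter.mpr ⟨(hl y hyS).1, hyv⟩, ?_⟩
        rw [(hl y hyS).2.2.1]
        exact hyv'
      · intro y hy; exact (hl y (hAS y (Finset.mem_filter.mp hy).1)).2.2.1
      · intro y hy; exact (hl y (hAS y (Finset.mem_filter.mp hy).1)).2.1
    set B := A.filter (fun y => v₁ (l y) < v₁ x) with hB
    have hABK : A.card = K.card + B.card := by
      have hsplit : A = K ∪ B := by
        ext y
        simp only [hK, hB, Finset.mem_union, Finset.mem_filter]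
        constructor
        · intro hy
          rcases le_or_gt (v₁ x) (v₁ (l y)) with h | h
          · exact Or.inl ⟨hy, h⟩
          · exact Or.inr ⟨hy, h⟩
        · rintro (⟨hy, -⟩ | ⟨hy, -⟩) <;> exact hy
      have hdisj : Disjoint K B := by
        rw [Finset.disjoint_left]
        intro y hyK hyB
        exact absurd (Finset.mem_filter.mp hyB).2
          (not_lt.mpr (Finset.mem_filter.mp hyK).2)
      rw [hsplit, Finset.card_union_of_disjoint hdisj]
    have hxB : x ∈ B := by
      refine Finset.mem_filter.mpr ⟨Finset.mem_filter.mpr ⟨hxS, le_refl _⟩, hxv⟩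
    have hBcard : 1 < B.card := by
      have h1 : 1 ≤ B.card := Finset.card_pos.mpr ⟨x, hxB⟩
      rw [Nat.even_iff] at hAev hKev
      omega
    obtain ⟨x', hx'B, hx'ne⟩ := Finset.exists_mem_ne hBcard x
    obtain ⟨hx'A, hx'v⟩ := Finset.mem_filter.mp hx'B
    obtain ⟨hx'S, hx'v'⟩ := Finset.mem_filter.mp hx'A
    exact ⟨x', hx'S, hx'ne, hx'v, hx'v'⟩
  -- choice function
  have key' : ∀ x : α, ∃ x', x ∈ E → x' ∈ S ∧ x' ≠ x ∧ v₁ (l x') < v₁ x ∧ v₁ x ≤ v₁ x' := by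
    intro x
    by_cases h : x ∈ E
    · obtain ⟨x', h1, h2, h3, h4⟩ := key x h
      exact ⟨x', fun _ => ⟨h1, h2, h3, h4⟩⟩
    · exact ⟨x, fun h' => absurd h' h⟩
  choose xf hxf using key'
  -- emission map
  set sp : α → α → α × α := fun a b => if a < b then (a, b) else (b, a) with hsp
  set ψ : α → α × α := fun x =>
    if v₀ x = v₀ (xf x) then sp x (xf x)
    else if v₀ x < v₀ (xf x) then sp x (l (xf x))
    else sp (l x) (xf x) with hψ
  -- basic facts about E members
  have hEfacts : ∀ x ∈ E, x ∈ S ∧ v₁ (l x) < v₁ x := by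
    intro x hx
    obtain ⟨hxCh, hxv⟩ := Finset.mem_filter.mp hx
    exact ⟨hChS x hxCh, hxv⟩
  -- emission lands in W
  have hψW : ∀ x ∈ E, ψ x ∈ W := by
    intro x hxE
    obtain ⟨hxS, hxv⟩ := hEfacts x hxE
    obtain ⟨hx'S, hx'ne, hx'lv, hx'v⟩ := hxf x hxE
    set x' := xf x
    have hlx := hl x hxS
    have hlx' := hl x' hx'S
    rw [hψ]
    dsimp only
    by_cases h0 : v₀ x = v₀ x'
    · rw [if_pos h0, hsp]
      dsimp only
      have hlx'nex : l x' ≠ x := fun h => by rw [h] at hx'lv; omega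
      have hlxnex' : l x ≠ x' := fun h => by rw [h] at hxv; omega
      by_cases hlt : x < x'
      · rw [if_pos hlt]
        exact hWmem _ _ hxS hx'S hlt (Or.inl ⟨h0, hlxnex'⟩)
      · rw [if_neg hlt]
        have : x' < x := lt_of_le_of_ne (not_lt.mp hlt) hx'ne
        exact hWmem _ _ hx'S hxS this (Or.inl ⟨h0.symm, hlx'nex⟩)
    · rw [if_neg h0]
      by_cases h1 : v₀ x < v₀ x'
      · rw [if_pos h1, hsp]
        dsimp only
        have hv0 : v₀ x < v₀ (l x') := by rw [hlx'.2.2.2]; exact h1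
        have hv1 : v₁ (l x') < v₁ x := hx'lv
        have hne : x ≠ l x' := fun h => by rw [← h] at hv0; omega
        by_cases hlt : x < l x'
        · rw [if_pos hlt]
          exact hWmem _ _ hxS hlx'.1 hlt (Or.inr (Or.inl ⟨hv0, hv1⟩))
        · rw [if_neg hlt]
          have : l x' < x := lt_of_le_of_ne (not_lt.mp hlt) (Ne.symm hne)
          exact hWmem _ _ hlx'.1 hxS this (Or.inr (Or.inr ⟨hv0, hv1⟩))
      · rw [if_neg h1, hsp]
        dsimp only
        have h2 : v₀ x' < v₀ x := lt_of_le_of_ne (not_lt.mp h1) (fun h => h0 h.symm)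
        have hv0 : v₀ x' < v₀ (l x) := by rw [hlx.2.2.2]; exact h2
        have hv1 : v₁ (l x) < v₁ x' := lt_of_lt_of_le hxv hx'v
        have hne : l x ≠ x' := fun h => by rw [h] at hv0; omega
        by_cases hlt : l x < x'
        · rw [if_pos hlt]
          exact hWmem _ _ hlx.1 hx'S hlt (Or.inr (Or.inr ⟨hv0, hv1⟩))
        · rw [if_neg hlt]
          have : x' < l x := lt_of_le_of_ne (not_lt.mp hlt) hne.symm
          exact hWmem _ _ hx'S hlx.1 this (Or.inr (Or.inl ⟨hv0, hv1⟩))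
  -- each emitted pair determines its sources (at most 2)
  set t : α → α := fun y => if v₁ (l y) < v₁ y then y else l y with ht
  have hfiber : ∀ x ∈ E, x = t (ψ x).1 ∨ x = t (ψ x).2 := by
    intro x hxE
    obtain ⟨hxS, hxv⟩ := hEfacts x hxE
    have htx : t x = x := by rw [ht]; dsimp only; rw [if_pos hxv]
    have htlx : t (l x) = x := by
      rw [ht]; dsimp only
      rw [(hl x hxS).2.2.1, if_neg (not_lt.mpr hxv.le)]
    rw [hψ]; dsimp only
    by_cases h0 : v₀ x = v₀ (xf x)
    · rw [if_pos h0, hsp]; dsimp only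
      by_cases hlt : x < xf x
      · rw [if_pos hlt]; left; exact htx.symm
      · rw [if_neg hlt]; right; exact htx.symm
    · rw [if_neg h0]
      by_cases h1 : v₀ x < v₀ (xf x)
      · rw [if_pos h1, hsp]; dsimp only
        by_cases hlt : x < l (xf x)
        · rw [if_pos hlt]; left; exact htx.symm
        · rw [if_neg hlt]; right; exact htx.symm
      · rw [if_neg h1, hsp]; dsimp only
        by_cases hlt : l x < xf x
        · rw [if_pos hlt]; left; exact htlx.symm
        · rw [if_neg hlt]; right; exact htlx.symm
  have hfib2 : ∀ w ∈ E.image ψ, (E.filter fun x => ψ x = w).card ≤ 2 := by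
    intro w hw
    have hsub : (E.filter fun x => ψ x = w) ⊆ {t w.1, t w.2} := by
      intro x hx
      obtain ⟨hxE, hxw⟩ := Finset.mem_filter.mp hx
      rcases hfiber x hxE with h | h
      · rw [hxw] at h; exact Finset.mem_insert.mpr (Or.inl h)
      · rw [hxw] at h
        exact Finset.mem_insert.mpr (Or.inr (Finset.mem_singleton.mpr h))
    refine le_trans (Finset.card_le_card hsub) ?_
    refine le_trans (Finset.card_insert_le _ _) ?_
    simp
  have himg : E.image ψ ⊆ W := by
    intro w hw
    obtain ⟨x, hxE, rfl⟩ := Finset.mem_image.mp hw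
    exact hψW x hxE
  have hE2 : E.card ≤ 2 * (E.image ψ).card := Finset.card_le_mul_card_image E 2 hfib2
  have hWc : (E.image ψ).card ≤ W.card := Finset.card_le_card himg
  omega

end Core

/-- If C is a bad (q,q,k)-arrangement (columns 0,...,q−1 all bad for the k curves of C,
polynomials over ℤ of degree ≤ q−1), then for each bad column c one can partition C into
k/2 pairs of curves agreeing at c, and furthermore there are at least ⌈k/4⌉ additional
intersections (pairs of distinct curves agreeing at a real point x with 0 ≤ x < q−1, i.e.
between columns or on a column other than the last), each distinct from the chosen
per-column pairings and from one another as unordered intersections. -/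
theorem stmt_15 (q k : ℕ) (hq : 2 ≤ q)
    (C : Finset (Polynomial ℤ)) (hcard : C.card = k)
    (hdeg : ∀ P ∈ C, P.natDegree ≤ q - 1)
    (hbad : ∀ c : ℤ, 0 ≤ c → c ≤ (q : ℤ) - 1 → ∀ y : ℤ,
      Even ((C.filter (fun P => P.eval c = y)).card)) :
    ∃ pairing : ℤ → Polynomial ℤ → Polynomial ℤ,
      (∀ c : ℤ, 0 ≤ c → c ≤ (q : ℤ) - 1 → ∀ P ∈ C,
        pairing c P ∈ C ∧ pairing c P ≠ P ∧ pairing c (pairing c P) = P ∧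
          (pairing c P).eval c = P.eval c) ∧
      ∃ T : Finset (Polynomial ℤ × Polynomial ℤ × ℝ),
        (k + 3) / 4 ≤ T.card ∧
        (∀ t ∈ T, t.1 ∈ C ∧ t.2.1 ∈ C ∧ t.1 ≠ t.2.1 ∧
          Polynomial.aeval t.2.2 t.1 = Polynomial.aeval t.2.2 t.2.1 ∧
          0 ≤ t.2.2 ∧ t.2.2 < (q : ℝ) - 1 ∧
          (∀ c : ℤ, t.2.2 = (c : ℝ) → pairing c t.1 ≠ t.2.1)) ∧
        (∀ t ∈ T, ∀ t' ∈ T, t ≠ t' →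
          ¬ (t.1 = t'.2.1 ∧ t.2.1 = t'.1 ∧ t.2.2 = t'.2.2)) := by
  classical
  letI : LinearOrder (Polynomial ℤ) := IsWellOrder.linearOrder WellOrderingRel
  set n := q - 1 with hn
  have hn1 : 1 ≤ n := by omega
  have hEv : ∀ c : ℕ, c ≤ n → ∀ y : ℤ,
      Even ((C.filter fun P => P.eval ((c:ℕ):ℤ) = y).card) := by
    intro c hc y
    exact hbad ((c:ℕ):ℤ) (by positivity) (by push_cast; omega) y
  -- build the chain of pairings with copying
  have base : ∃ f : Polynomial ℤ → Polynomial ℤ, ∀ P ∈ C,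
      f P ∈ C ∧ f P ≠ P ∧ f (f P) = P ∧ (f P).eval ((0:ℕ):ℤ) = P.eval ((0:ℕ):ℤ) := by
    obtain ⟨f, -, hf⟩ := exists_pairing (fun P => P.eval ((0:ℕ):ℤ)) C (hEv 0 (by omega))
    exact ⟨f, hf⟩
  have step : ∀ c : ℕ, c + 1 ≤ n → ∀ g : Polynomial ℤ → Polynomial ℤ,
      (∀ P ∈ C, g P ∈ C ∧ g P ≠ P ∧ g (g P) = P) →
      ∃ f : Polynomial ℤ → Polynomial ℤ,
        (∀ P ∈ C, f P ∈ C ∧ f P ≠ P ∧ f (f P) = P ∧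
          (f P).eval ((c+1:ℕ):ℤ) = P.eval ((c+1:ℕ):ℤ)) ∧
        (∀ P ∈ C, (g P).eval ((c+1:ℕ):ℤ) = P.eval ((c+1:ℕ):ℤ) → f P = g P) := by
    intro c hc g hg
    obtain ⟨f, hf, hcopy⟩ := exists_pairing_copy (fun P => P.eval ((c+1:ℕ):ℤ)) C g
      hg (hEv (c+1) hc)
    exact ⟨f, hf, hcopy⟩
  have chain : ∃ F : ℕ → Polynomial ℤ → Polynomial ℤ,
      (∀ c, c ≤ n → ∀ P ∈ C, F c P ∈ C ∧ F c P ≠ P ∧ F c (F c P) = P ∧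
        (F c P).eval ((c:ℕ):ℤ) = P.eval ((c:ℕ):ℤ)) ∧
      (∀ c, c + 1 ≤ n → ∀ P ∈ C,
        (F c P).eval ((c+1:ℕ):ℤ) = P.eval ((c+1:ℕ):ℤ) → F (c+1) P = F c P) := by
    obtain ⟨f₀, hf₀⟩ := base
    have step' : ∀ c : ℕ,
        ∀ g : {f : Polynomial ℤ → Polynomial ℤ // c ≤ n → ∀ P ∈ C,
          f P ∈ C ∧ f P ≠ P ∧ f (f P) = P ∧
          (f P).eval ((c:ℕ):ℤ) = P.eval ((c:ℕ):ℤ)},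
        ∃ f : Polynomial ℤ → Polynomial ℤ,
          (c + 1 ≤ n → ∀ P ∈ C, f P ∈ C ∧ f P ≠ P ∧ f (f P) = P ∧
            (f P).eval ((c+1:ℕ):ℤ) = P.eval ((c+1:ℕ):ℤ)) ∧
          (c + 1 ≤ n → ∀ P ∈ C,
            (g.1 P).eval ((c+1:ℕ):ℤ) = P.eval ((c+1:ℕ):ℤ) → f P = g.1 P) := by
      intro c g
      by_cases h : c + 1 ≤ n
      · obtain ⟨f, h1, h2⟩ := step c h g.1
          (fun P hP => ⟨(g.2 (by omega) P hP).1, (g.2 (by omega) P hP).2.1,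
            (g.2 (by omega) P hP).2.2.1⟩)
        exact ⟨f, fun _ => h1, fun _ => h2⟩
      · exact ⟨g.1, fun h' => absurd h' h, fun h' => absurd h' h⟩
    choose stepF hstep1 hstep2 using step'
    refine ⟨fun c => (Nat.rec (motive := fun c => {f : Polynomial ℤ → Polynomial ℤ //
        c ≤ n → ∀ P ∈ C, f P ∈ C ∧ f P ≠ P ∧ f (f P) = P ∧
        (f P).eval ((c:ℕ):ℤ) = P.eval ((c:ℕ):ℤ)})
      ⟨f₀, fun _ => hf₀⟩
      (fun c prev => ⟨stepF c prev, hstep1 c prev⟩) c).1, ?_, ?_⟩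
    · intro c hc
      exact (Nat.rec (motive := fun c => {f : Polynomial ℤ → Polynomial ℤ //
        c ≤ n → ∀ P ∈ C, f P ∈ C ∧ f P ≠ P ∧ f (f P) = P ∧
        (f P).eval ((c:ℕ):ℤ) = P.eval ((c:ℕ):ℤ)})
        ⟨f₀, fun _ => hf₀⟩
        (fun c prev => ⟨stepF c prev, hstep1 c prev⟩) c).2 hc
    · intro c hc P hP hval
      exact hstep2 c _ hc P hP hval
  obtain ⟨F, hFG, hFC⟩ := chain
  -- every curve changes its partner at some slab
  have hchange : ∀ P ∈ C, ∃ c : ℕ, c < n ∧ F c P ≠ F (c+1) P := by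
    intro P hP
    by_contra hcon
    push_neg at hcon
    have hsame : ∀ c, c ≤ n → F c P = F 0 P := by
      intro c hc
      induction c with
      | zero => rfl
      | succ c ih =>
        rw [← hcon c (by omega)]
        exact ih (by omega)
    have hQC : F 0 P ∈ C := (hFG 0 (by omega) P hP).1
    have hQne : F 0 P ≠ P := (hFG 0 (by omega) P hP).2.1
    have hroots : ∀ c : ℕ, c ≤ n → (F 0 P).eval ((c:ℕ):ℤ) = P.eval ((c:ℕ):ℤ) := by
      intro c hc
      have := (hFG c hc P hP).2.2.2
      rw [hsame c hc] at this
      exact this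
    have hD : P - F 0 P ≠ 0 := sub_ne_zero.mpr (Ne.symm hQne)
    have hdeg' : (P - F 0 P).natDegree < n + 1 := by
      have h0 := Polynomial.natDegree_sub_le P (F 0 P)
      have h1 := hdeg P hP
      have h2 := hdeg (F 0 P) hQC
      have h3 : P.natDegree ⊔ (F 0 P).natDegree ≤ n := max_le (by omega) (by omega)
      omega
    have hzero : P - F 0 P = 0 := by
      apply Polynomial.eq_zero_of_natDegree_lt_card_of_eval_eq_zero (P - F 0 P)
        (f := fun i : Fin (n+1) => ((i : ℕ) : ℤ))
      · intro a b hab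
        simp only at hab
        exact Fin.ext (by exact_mod_cast hab)
      · intro i
        rw [Polynomial.eval_sub, sub_eq_zero]
        exact (hroots i (by omega)).symm
      · simp only [Fintype.card_fin]
        exact hdeg'
    exact hD hzero
  -- aeval at integer casts
  have haeval : ∀ (P : Polynomial ℤ) (m : ℤ),
      Polynomial.aeval ((m : ℤ) : ℝ) P = ((P.eval m : ℤ) : ℝ) := by
    intro P m
    rw [Polynomial.aeval_def, Polynomial.eval₂_eq_eval_map]
    have := Polynomial.eval_intCast_map (algebraMap ℤ ℝ) P m
    simpa using this
  -- IVT for sign-reversed pairs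
  have hIVT : ∀ (m : ℤ) (P Q : Polynomial ℤ), P.eval m < Q.eval m →
      Q.eval (m+1) < P.eval (m+1) →
      ∃ x : ℝ, (m:ℝ) < x ∧ x < (m:ℝ)+1 ∧
        Polynomial.aeval x P = Polynomial.aeval x Q := by
    intro m P Q h1 h2
    set f : ℝ → ℝ := fun x => Polynomial.aeval x P - Polynomial.aeval x Q with hf
    have hfc : Continuous f :=
      (Polynomial.continuous_aeval P).sub (Polynomial.continuous_aeval Q)
    have hle : (m:ℝ) ≤ (m:ℝ)+1 := by linarith
    have hv1 : f (m:ℝ) < 0 := by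
      rw [hf]
      dsimp only
      rw [haeval P m, haeval Q m]
      have : ((P.eval m : ℤ):ℝ) < ((Q.eval m : ℤ):ℝ) := by exact_mod_cast h1
      linarith
    have hv2 : 0 < f ((m:ℝ)+1) := by
      rw [hf]
      dsimp only
      have hcast : (m:ℝ)+1 = ((m+1 : ℤ):ℝ) := by push_cast; ring
      rw [hcast, haeval P (m+1), haeval Q (m+1)]
      have : ((Q.eval (m+1) : ℤ):ℝ) < ((P.eval (m+1) : ℤ):ℝ) := by exact_mod_cast h2
      linarith
    have h0 : (0:ℝ) ∈ Set.Ioo (f (m:ℝ)) (f ((m:ℝ)+1)) := ⟨hv1, hv2⟩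
    obtain ⟨x, hx, hfx⟩ := intermediate_value_Ioo hle hfc.continuousOn h0
    refine ⟨x, hx.1, hx.2, ?_⟩
    have : Polynomial.aeval x P - Polynomial.aeval x Q = 0 := hfx
    linarith [this]
  -- specialized forms with ℕ columns
  have haevalN : ∀ (P : Polynomial ℤ) (c : ℕ),
      Polynomial.aeval ((c:ℕ):ℝ) P = ((P.eval ((c:ℕ):ℤ) : ℤ) : ℝ) := by
    intro P c
    have := haeval P ((c:ℕ):ℤ)
    have hcst : (((c:ℕ):ℤ):ℝ) = ((c:ℕ):ℝ) := by push_cast; ring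
    rw [hcst] at this
    exact this
  have hIVTN : ∀ (c : ℕ) (P Q : Polynomial ℤ), P.eval ((c:ℕ):ℤ) < Q.eval ((c:ℕ):ℤ) →
      Q.eval ((c+1:ℕ):ℤ) < P.eval ((c+1:ℕ):ℤ) →
      ∃ x : ℝ, ((c:ℕ):ℝ) < x ∧ x < ((c:ℕ):ℝ)+1 ∧
        Polynomial.aeval x P = Polynomial.aeval x Q := by
    intro c P Q h1 h2
    have hc1 : ((c+1:ℕ):ℤ) = ((c:ℕ):ℤ) + 1 := by push_cast; ring
    rw [hc1] at h2
    obtain ⟨x, hx1, hx2, hx3⟩ := hIVT ((c:ℕ):ℤ) P Q h1 h2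
    have hcst : (((c:ℕ):ℤ):ℝ) = ((c:ℕ):ℝ) := by push_cast; ring
    rw [hcst] at hx1 hx2
    exact ⟨x, hx1, hx2, hx3⟩
  -- per-slab credit sets
  set Wc : ℕ → Finset (Polynomial ℤ × Polynomial ℤ) := fun c =>
    (C ×ˢ C).filter fun pq => pq.1 < pq.2 ∧
      ((pq.1.eval ((c:ℕ):ℤ) = pq.2.eval ((c:ℕ):ℤ) ∧ F c pq.1 ≠ pq.2) ∨
       (pq.1.eval ((c:ℕ):ℤ) < pq.2.eval ((c:ℕ):ℤ) ∧
         pq.2.eval ((c+1:ℕ):ℤ) < pq.1.eval ((c+1:ℕ):ℤ)) ∨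
       (pq.2.eval ((c:ℕ):ℤ) < pq.1.eval ((c:ℕ):ℤ) ∧
         pq.1.eval ((c+1:ℕ):ℤ) < pq.2.eval ((c+1:ℕ):ℤ))) with hWc
  have hcore : ∀ c : ℕ, c < n →
      (C.filter fun P => F c P ≠ F (c+1) P).card ≤ 4 * (Wc c).card := by
    intro c hc
    refine core_lemma C (fun P => P.eval ((c:ℕ):ℤ)) (fun P => P.eval ((c+1:ℕ):ℤ))
      (F c) (F (c+1)) (Wc c)
      (fun x hx => hFG c (by omega) x hx)
      (fun x hx => hFG (c+1) (by omega) x hx)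
      (fun x hx hv => hFC c (by omega) x hx hv) ?_ _ (fun x => Finset.mem_filter) 
    intro p q hp hq hlt hcond
    rw [hWc]
    exact Finset.mem_filter.mpr ⟨Finset.mem_product.mpr ⟨hp, hq⟩, hlt, hcond⟩
  -- triples
  set g : ℕ → Polynomial ℤ × Polynomial ℤ → Polynomial ℤ × Polynomial ℤ × ℝ := fun c pq =>
    (pq.1, pq.2, if h : ∃ x : ℝ, ((c:ℕ):ℝ) < x ∧ x < ((c:ℕ):ℝ)+1 ∧
        Polynomial.aeval x pq.1 = Polynomial.aeval x pq.2 then h.choose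
      else ((c:ℕ):ℝ)) with hg
  set Tc : ℕ → Finset (Polynomial ℤ × Polynomial ℤ × ℝ) := fun c => (Wc c).image (g c)
    with hTc
  set T : Finset (Polynomial ℤ × Polynomial ℤ × ℝ) := (Finset.range n).biUnion Tc with hT
  have hTcprop : ∀ c : ℕ, c < n → ∀ t ∈ Tc c,
      t.1 ∈ C ∧ t.2.1 ∈ C ∧ t.1 < t.2.1 ∧
      Polynomial.aeval t.2.2 t.1 = Polynomial.aeval t.2.2 t.2.1 ∧
      ((c:ℕ):ℝ) ≤ t.2.2 ∧ t.2.2 < ((c:ℕ):ℝ)+1 ∧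
      (∀ m : ℤ, t.2.2 = (m:ℝ) → F m.toNat t.1 ≠ t.2.1) := by
    intro c hc t ht
    rw [hTc] at ht
    obtain ⟨pq, hpq, rfl⟩ := Finset.mem_image.mp ht
    have hpq' := Finset.mem_filter.mp hpq
    obtain ⟨hP, hQ⟩ := Finset.mem_product.mp hpq'.1
    have hlt : pq.1 < pq.2 := hpq'.2.1
    have hcond := hpq'.2.2
    rw [hg]
    dsimp only
    by_cases hex : ∃ x : ℝ, ((c:ℕ):ℝ) < x ∧ x < ((c:ℕ):ℝ)+1 ∧
        Polynomial.aeval x pq.1 = Polynomial.aeval x pq.2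
    · rw [dif_pos hex]
      obtain ⟨h1, h2, h3⟩ := hex.choose_spec
      refine ⟨hP, hQ, hlt, h3, le_of_lt h1, h2, ?_⟩
      intro m hm
      exfalso
      rw [hm] at h1 h2
      have e1 : ((c:ℕ):ℤ) < m := by exact_mod_cast h1
      have e2 : (m:ℝ) < (((c:ℕ):ℤ):ℝ) + 1 := by push_cast; push_cast at h2; linarith
      have e3 : m < ((c:ℕ):ℤ) + 1 := by exact_mod_cast e2
      omega
    · rw [dif_neg hex]
      have hLcase : pq.1.eval ((c:ℕ):ℤ) = pq.2.eval ((c:ℕ):ℤ) ∧ F c pq.1 ≠ pq.2 := by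
        rcases hcond with h | h | h
        · exact h
        · exact absurd (hIVTN c pq.1 pq.2 h.1 h.2) hex
        · refine absurd ?_ hex
          obtain ⟨x, hx1, hx2, hx3⟩ := hIVTN c pq.2 pq.1 h.1 h.2
          exact ⟨x, hx1, hx2, hx3.symm⟩
      refine ⟨hP, hQ, hlt, ?_, le_refl _, by linarith, ?_⟩
      · rw [haevalN pq.1 c, haevalN pq.2 c, hLcase.1]
      · intro m hm
        have e1 : m = ((c:ℕ):ℤ) := by exact_mod_cast hm.symm
        have e2 : m.toNat = c := by omega
        rw [e2]
        exact hLcase.2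
  have hTcard : ∀ c, (Tc c).card = (Wc c).card := by
    intro c
    rw [hTc]
    apply Finset.card_image_of_injOn
    intro a _ b _ hab
    rw [hg] at hab
    dsimp only at hab
    simp only [Prod.mk.injEq] at hab
    exact Prod.ext hab.1 hab.2.1
  have hdisj : ∀ c ∈ Finset.range n, ∀ c' ∈ Finset.range n, c ≠ c' →
      Disjoint (Tc c) (Tc c') := by
    intro c hc c' hc' hne
    rw [Finset.disjoint_left]
    intro t htc htc'
    obtain ⟨-, -, -, -, e1, e2, -⟩ := hTcprop c (Finset.mem_range.mp hc) t htc
    obtain ⟨-, -, -, -, e3, e4, -⟩ := hTcprop c' (Finset.mem_range.mp hc') t htc'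
    apply hne
    have f1 : ((c:ℕ):ℝ) < ((c':ℕ):ℝ)+1 := by linarith
    have f2 : ((c':ℕ):ℝ) < ((c:ℕ):ℝ)+1 := by linarith
    have f3 : (c:ℕ) < c'+1 := by exact_mod_cast f1
    have f4 : (c':ℕ) < c+1 := by exact_mod_cast f2
    omega
  have hTbig : T.card = ∑ c ∈ Finset.range n, (Tc c).card := by
    rw [hT]
    exact Finset.card_biUnion hdisj
  have hcover : C ⊆ (Finset.range n).biUnion
      (fun c => C.filter fun P => F c P ≠ F (c+1) P) := by
    intro P hP
    obtain ⟨c, hc1, hc2⟩ := hchange P hP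
    exact Finset.mem_biUnion.mpr ⟨c, Finset.mem_range.mpr hc1,
      Finset.mem_filter.mpr ⟨hP, hc2⟩⟩
  have hk4 : k ≤ 4 * T.card := by
    have hs1 : k ≤ ∑ c ∈ Finset.range n, (C.filter fun P => F c P ≠ F (c+1) P).card := by
      calc k = C.card := hcard.symm
      _ ≤ ((Finset.range n).biUnion (fun c => C.filter fun P => F c P ≠ F (c+1) P)).card :=
          Finset.card_le_card hcover
      _ ≤ _ := Finset.card_biUnion_le
    have hs2 : ∑ c ∈ Finset.range n, (C.filter fun P => F c P ≠ F (c+1) P).card ≤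
        ∑ c ∈ Finset.range n, 4 * (Wc c).card :=
      Finset.sum_le_sum (fun c hc => hcore c (Finset.mem_range.mp hc))
    have hs3 : ∑ c ∈ Finset.range n, 4 * (Wc c).card = 4 * ∑ c ∈ Finset.range n, (Tc c).card := by
      rw [Finset.mul_sum]
      exact Finset.sum_congr rfl (fun c _ => by rw [hTcard c])
    rw [hTbig]
    omega
  -- final assembly
  refine ⟨fun c P => F c.toNat P, ?_, T, by omega, ?_, ?_⟩
  · intro c h0 h1 P hP
    have hcn : c.toNat ≤ n := by omega
    have hcast : ((c.toNat:ℕ):ℤ) = c := Int.toNat_of_nonneg h0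
    obtain ⟨a1, a2, a3, a4⟩ := hFG c.toNat hcn P hP
    rw [hcast] at a4
    exact ⟨a1, a2, a3, a4⟩
  · intro t ht
    rw [hT] at ht
    obtain ⟨c, hc, htc⟩ := Finset.mem_biUnion.mp ht
    have hcn := Finset.mem_range.mp hc
    obtain ⟨b1, b2, b3, b4, b5, b6, b7⟩ := hTcprop c hcn t htc
    have hq1 : ((c:ℕ):ℝ) + 1 ≤ (q:ℝ) - 1 := by
      have : (c:ℕ) + 1 ≤ n := by omega
      have h' : ((c+1:ℕ):ℝ) ≤ ((n:ℕ):ℝ) := by exact_mod_cast this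
      have h'' : ((n:ℕ):ℝ) = (q:ℝ) - 1 := by
        rw [hn]
        push_cast [Nat.cast_sub (by omega : 1 ≤ q)]
        ring
      push_cast at h'
      linarith
    refine ⟨b1, b2, ne_of_lt b3, b4, ?_, by linarith, ?_⟩
    · have : (0:ℝ) ≤ ((c:ℕ):ℝ) := by positivity
      linarith
    · intro m hm
      exact b7 m hm
  · rintro t ht t' ht' hne ⟨e1, e2, -⟩
    rw [hT] at ht ht'
    obtain ⟨c, hc, htc⟩ := Finset.mem_biUnion.mp ht
    obtain ⟨c', hc', htc'⟩ := Finset.mem_biUnion.mp ht'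
    have b3 := (hTcprop c (Finset.mem_range.mp hc) t htc).2.2.1
    have b3' := (hTcprop c' (Finset.mem_range.mp hc') t' htc').2.2.1
    rw [e1, e2] at b3
    exact absurd b3' (not_lt.mpr (le_of_lt b3))
end

section
/- Let S be a set of 2d−1 or fewer distinct keys (a,b) ∈ ℕ², and let D_i(a,b) = a + b·i for i ∈ {0,...,d−1}. Then the derivation incidence matrix M_{D,S} has full row rank over GF(2). Consequently, if the tables T_0,...,T_{d−1} are filled with independent uniform random values in GF(2)^ℓ, the hash values h(a,b) = T_0(D_0(a,b)) XOR ... XOR T_{d−1}(D_{d−1}(a,b)) for (a,b) ∈ S are uniformly and independently distributed. -/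
open Finset

lemma aux_two (p q : ℕ × ℕ) (i j : ℕ) (hij : i ≠ j)
    (h1 : p.1 + p.2 * i = q.1 + q.2 * i) (h2 : p.1 + p.2 * j = q.1 + q.2 * j) : p = q := by
  have h1' : (p.1 : ℤ) + p.2 * i = q.1 + q.2 * i := by exact_mod_cast h1
  have h2' : (p.1 : ℤ) + p.2 * j = q.1 + q.2 * j := by exact_mod_cast h2
  have hb : ((p.2 : ℤ) - q.2) * ((i : ℤ) - j) = 0 := by linear_combination h1' - h2'
  have hij' : (i : ℤ) - j ≠ 0 := by
    intro h; apply hij; exact_mod_cast sub_eq_zero.mp h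
  have hb2 : (p.2 : ℤ) = q.2 := by
    rcases mul_eq_zero.mp hb with h | h
    · linarith [sub_eq_zero.mp h]
    · exact absurd h hij'
  have hbn : p.2 = q.2 := by exact_mod_cast hb2
  have han : p.1 = q.1 := by
    have : (p.1 : ℤ) = q.1 := by linear_combination h1' - (i : ℤ) * (by exact_mod_cast hb2 : (p.2:ℤ) = q.2)
    exact_mod_cast this
  exact Prod.ext han hbn

lemma chain_card (d : ℕ) (hd : 1 ≤ d) (A : Finset (ℕ × ℕ)) (M : ℕ → Finset (ℕ × ℕ))
    (hMA : ∀ i, i < d → M i ⊆ A)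
    (hM2 : ∀ i, i < d → 2 ≤ (M i).card)
    (hsep : ∀ p q i j, i < d → j < d → i ≠ j → p ∈ M i → p ∈ M j → q ∈ M i → q ∈ M j → p = q)
    (hbtw : ∀ p i j k, i ≤ j → j ≤ k → k < d → p ∈ M i → p ∈ M k → p ∈ M j) :
    d + 1 ≤ (A.filter fun p => ∃ i, i < d ∧ p ∈ M i).card := by
  classical
  set U := A.filter fun p => ∃ i, i < d ∧ p ∈ M i with hU
  set E : ℕ × ℕ → ℕ := fun p => (((Finset.range d).filter fun i => p ∈ M i).sup id) with hE
  have hle : ∀ p i, i < d → p ∈ M i → i ≤ E p := by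
    intro p i hi hp
    exact Finset.le_sup (f := id) (mem_filter.mpr ⟨mem_range.mpr hi, hp⟩)
  have hmem : ∀ p i, i < d → p ∈ M i → (E p < d ∧ p ∈ M (E p)) := by
    intro p i hi hp
    have hne : (((Finset.range d).filter fun i => p ∈ M i)).Nonempty :=
      ⟨i, mem_filter.mpr ⟨mem_range.mpr hi, hp⟩⟩
    obtain ⟨b, hb, hbe⟩ := Finset.exists_mem_eq_sup _ hne id
    rw [mem_filter, mem_range] at hb
    rw [hE]
    simp only [hbe, id]
    exact ⟨hb.1, hb.2⟩
  have hsub : M (d - 1) ⊆ U.filter fun p => E p = d - 1 := by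
    intro q hq
    have hd1 : d - 1 < d := by omega
    have hqU : q ∈ U := mem_filter.mpr ⟨hMA _ hd1 hq, ⟨d - 1, hd1, hq⟩⟩
    refine mem_filter.mpr ⟨hqU, ?_⟩
    have h1 := hle q (d - 1) hd1 hq
    have h2 := (hmem q (d - 1) hd1 hq).1
    omega
  have h2 : 2 ≤ (U.filter fun p => E p = d - 1).card :=
    le_trans (hM2 _ (by omega)) (Finset.card_le_card hsub)
  have hsurj : ∀ i, i + 1 < d → ∃ p ∈ U.filter (fun p => ¬(E p = d - 1)), E p = i := by
    intro i hi
    have h21 : 1 < (M i).card := by have := hM2 i (by omega); omega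
    obtain ⟨p, hp, q, hq, hpq⟩ := Finset.one_lt_card.mp h21
    have hone : ¬(p ∈ M (i + 1) ∧ q ∈ M (i + 1)) := by
      rintro ⟨h1, h2⟩
      exact hpq (hsep p q i (i + 1) (by omega) hi (by omega) hp h1 hq h2)
    have : ∃ r, r ∈ M i ∧ r ∉ M (i + 1) := by
      by_cases hpi : p ∈ M (i + 1)
      · exact ⟨q, hq, fun h => hone ⟨hpi, h⟩⟩
      · exact ⟨p, hp, hpi⟩
    obtain ⟨r, hr, hr1⟩ := this
    have hEr : E r = i := by
      have h1 := hle r i (by omega) hr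
      have ⟨h2, h3⟩ := hmem r i (by omega) hr
      rcases Nat.lt_or_ge i (E r) with h | h
      · exact absurd (hbtw r i (i + 1) (E r) (by omega) (by omega) h2 hr h3) hr1
      · omega
    refine ⟨r, ?_, hEr⟩
    refine mem_filter.mpr ⟨mem_filter.mpr ⟨hMA _ (by omega) hr, ⟨i, by omega, hr⟩⟩, ?_⟩
    omega
  have hcard1 : d - 1 ≤ (U.filter fun p => ¬(E p = d - 1)).card := by
    have : (Finset.range (d - 1)).card ≤ (U.filter fun p => ¬(E p = d - 1)).card := by
      apply Finset.card_le_card_of_surjOn E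
      intro i hi
      simp only [coe_range, Set.mem_Iio] at hi
      obtain ⟨p, hp, hEp⟩ := hsurj i (by omega)
      exact ⟨p, hp, hEp⟩
    simpa using this
  have := Finset.card_filter_add_card_filter_not (s := U) (p := fun p => E p = d - 1)
  omega

lemma key_lemma (d : ℕ) (hd : 1 ≤ d) (A : Finset (ℕ × ℕ)) (hA : A.Nonempty)
    (heven : ∀ i, i < d → ∀ v, Even ((A.filter fun p => p.1 + p.2 * i = v).card)) :
    2 * d ≤ A.card := by
  classical
  set Mx : ℕ → Finset (ℕ × ℕ) := fun i =>
    A.filter fun p => p.1 + p.2 * i = A.sup' hA (fun q => q.1 + q.2 * i) with hMxdef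
  set Mn : ℕ → Finset (ℕ × ℕ) := fun i =>
    A.filter fun p => p.1 + p.2 * i = A.inf' hA (fun q => q.1 + q.2 * i) with hMndef
  have hMxA : ∀ i, Mx i ⊆ A := fun i => Finset.filter_subset _ _
  have hMnA : ∀ i, Mn i ⊆ A := fun i => Finset.filter_subset _ _
  have hMxne : ∀ i, (Mx i).Nonempty := by
    intro i
    obtain ⟨b, hb, hbe⟩ := Finset.exists_mem_eq_sup' hA (fun q => q.1 + q.2 * i)
    exact ⟨b, mem_filter.mpr ⟨hb, hbe.symm⟩⟩
  have hMnne : ∀ i, (Mn i).Nonempty := by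
    intro i
    obtain ⟨b, hb, hbe⟩ := Finset.exists_mem_eq_inf' hA (fun q => q.1 + q.2 * i)
    exact ⟨b, mem_filter.mpr ⟨hb, hbe.symm⟩⟩
  have hMx2 : ∀ i, i < d → 2 ≤ (Mx i).card := by
    intro i hi
    have he := heven i hi (A.sup' hA (fun q => q.1 + q.2 * i))
    have hpos := Finset.card_pos.mpr (hMxne i)
    have he' : Even (Mx i).card := he
    obtain ⟨r, hr⟩ := he'
    omega
  have hMn2 : ∀ i, i < d → 2 ≤ (Mn i).card := by
    intro i hi
    have he := heven i hi (A.inf' hA (fun q => q.1 + q.2 * i))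
    have hpos := Finset.card_pos.mpr (hMnne i)
    have he' : Even (Mn i).card := he
    obtain ⟨r, hr⟩ := he'
    omega
  have hMxmax : ∀ i p q, p ∈ Mx i → q ∈ A → q.1 + q.2 * i ≤ p.1 + p.2 * i := by
    intro i p q hp hq
    have := Finset.le_sup' (fun q => q.1 + q.2 * i) hq
    rw [(mem_filter.mp hp).2]
    exact this
  have hMnmin : ∀ i p q, p ∈ Mn i → q ∈ A → p.1 + p.2 * i ≤ q.1 + q.2 * i := by
    intro i p q hp hq
    have := Finset.inf'_le (fun q => q.1 + q.2 * i) hq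
    rw [(mem_filter.mp hp).2]
    exact this
  have hsepx : ∀ p q i j, i < d → j < d → i ≠ j → p ∈ Mx i → p ∈ Mx j → q ∈ Mx i → q ∈ Mx j → p = q := by
    intro p q i j _ _ hij hpi hpj hqi hqj
    exact aux_two p q i j hij
      ((mem_filter.mp hpi).2.trans (mem_filter.mp hqi).2.symm)
      ((mem_filter.mp hpj).2.trans (mem_filter.mp hqj).2.symm)
  have hsepn : ∀ p q i j, i < d → j < d → i ≠ j → p ∈ Mn i → p ∈ Mn j → q ∈ Mn i → q ∈ Mn j → p = q := by
    intro p q i j _ _ hij hpi hpj hqi hqj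
    exact aux_two p q i j hij
      ((mem_filter.mp hpi).2.trans (mem_filter.mp hqi).2.symm)
      ((mem_filter.mp hpj).2.trans (mem_filter.mp hqj).2.symm)
  have hbtwx : ∀ p i j k, i ≤ j → j ≤ k → k < d → p ∈ Mx i → p ∈ Mx k → p ∈ Mx j := by
    intro p i j k hij hjk _ hpi hpk
    have hpA : p ∈ A := hMxA i hpi
    by_cases hik : i = k
    · have hji : j = i := by omega
      rwa [hji]
    · have hik' : (i : ℤ) < k := by
        have : i ≤ k := hij.trans hjk
        have : i ≠ k := hik
        omega
      have hall : ∀ q ∈ A, q.1 + q.2 * j ≤ p.1 + p.2 * j := by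
        intro q hq
        have h1 : (q.1 : ℤ) + q.2 * i ≤ (p.1 : ℤ) + p.2 * i := by
          exact_mod_cast hMxmax i p q hpi hq
        have h2 : (q.1 : ℤ) + q.2 * k ≤ (p.1 : ℤ) + p.2 * k := by
          exact_mod_cast hMxmax k p q hpk hq
        have hkj : (0 : ℤ) ≤ (k : ℤ) - j := by
          have : (j : ℤ) ≤ k := by exact_mod_cast hjk
          linarith
        have hji' : (0 : ℤ) ≤ (j : ℤ) - i := by
          have : (i : ℤ) ≤ j := by exact_mod_cast hij
          linarith
        have m1 := mul_le_mul_of_nonneg_left h1 hkj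
        have m2 := mul_le_mul_of_nonneg_left h2 hji'
        have e1 : ((k : ℤ) - j) * ((q.1 : ℤ) + q.2 * i) + ((j : ℤ) - i) * ((q.1 : ℤ) + q.2 * k)
            = ((k : ℤ) - i) * ((q.1 : ℤ) + q.2 * j) := by ring
        have e2 : ((k : ℤ) - j) * ((p.1 : ℤ) + p.2 * i) + ((j : ℤ) - i) * ((p.1 : ℤ) + p.2 * k)
            = ((k : ℤ) - i) * ((p.1 : ℤ) + p.2 * j) := by ring
        have big : ((k : ℤ) - i) * ((q.1 : ℤ) + q.2 * j) ≤ ((k : ℤ) - i) * ((p.1 : ℤ) + p.2 * j) := by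
          linarith
        have := le_of_mul_le_mul_left big (by linarith : (0 : ℤ) < (k : ℤ) - i)
        exact_mod_cast this
      refine mem_filter.mpr ⟨hpA, le_antisymm (Finset.le_sup' (fun q => q.1 + q.2 * j) hpA) (Finset.sup'_le hA _ hall)⟩
  have hbtwn : ∀ p i j k, i ≤ j → j ≤ k → k < d → p ∈ Mn i → p ∈ Mn k → p ∈ Mn j := by
    intro p i j k hij hjk _ hpi hpk
    have hpA : p ∈ A := hMnA i hpi
    by_cases hik : i = k
    · have hji : j = i := by omega
      rwa [hji]
    · have hik' : (i : ℤ) < k := by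
        have : i ≤ k := hij.trans hjk
        have : i ≠ k := hik
        omega
      have hall : ∀ q ∈ A, p.1 + p.2 * j ≤ q.1 + q.2 * j := by
        intro q hq
        have h1 : (p.1 : ℤ) + p.2 * i ≤ (q.1 : ℤ) + q.2 * i := by
          exact_mod_cast hMnmin i p q hpi hq
        have h2 : (p.1 : ℤ) + p.2 * k ≤ (q.1 : ℤ) + q.2 * k := by
          exact_mod_cast hMnmin k p q hpk hq
        have hkj : (0 : ℤ) ≤ (k : ℤ) - j := by
          have : (j : ℤ) ≤ k := by exact_mod_cast hjk
          linarith
        have hji' : (0 : ℤ) ≤ (j : ℤ) - i := by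
          have : (i : ℤ) ≤ j := by exact_mod_cast hij
          linarith
        have m1 := mul_le_mul_of_nonneg_left h1 hkj
        have m2 := mul_le_mul_of_nonneg_left h2 hji'
        have e1 : ((k : ℤ) - j) * ((q.1 : ℤ) + q.2 * i) + ((j : ℤ) - i) * ((q.1 : ℤ) + q.2 * k)
            = ((k : ℤ) - i) * ((q.1 : ℤ) + q.2 * j) := by ring
        have e2 : ((k : ℤ) - j) * ((p.1 : ℤ) + p.2 * i) + ((j : ℤ) - i) * ((p.1 : ℤ) + p.2 * k)
            = ((k : ℤ) - i) * ((p.1 : ℤ) + p.2 * j) := by ring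
        have big : ((k : ℤ) - i) * ((p.1 : ℤ) + p.2 * j) ≤ ((k : ℤ) - i) * ((q.1 : ℤ) + q.2 * j) := by
          linarith
        have := le_of_mul_le_mul_left big (by linarith : (0 : ℤ) < (k : ℤ) - i)
        exact_mod_cast this
      refine mem_filter.mpr ⟨hpA, le_antisymm (Finset.le_inf' hA (fun q => q.1 + q.2 * j) hall) (Finset.inf'_le _ hpA)⟩
  -- case d = 1
  by_cases hd1 : d = 1
  · subst hd1
    calc 2 * 1 = 2 := by norm_num
      _ ≤ (Mx 0).card := hMx2 0 (by norm_num)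
      _ ≤ A.card := Finset.card_le_card (hMxA 0)
  · have hd2 : 2 ≤ d := by omega
    have hU := chain_card d hd A Mx (fun i _ => hMxA i) hMx2 hsepx hbtwx
    have hL := chain_card d hd A Mn (fun i _ => hMnA i) hMn2 hsepn hbtwn
    set U := A.filter fun p => ∃ i, i < d ∧ p ∈ Mx i with hUdef
    set L := A.filter fun p => ∃ i, i < d ∧ p ∈ Mn i with hLdef
    have hconst : ∀ i, i < d → ∀ p, p ∈ Mx i → p ∈ Mn i → False := by
      intro i hi p hpx hpn
      have hc : ∀ q ∈ A, q.1 + q.2 * i = p.1 + p.2 * i := fun q hq =>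
        le_antisymm (hMxmax i p q hpx hq) (hMnmin i p q hpn hq)
      set i' := if i = 0 then 1 else 0 with hi'def
      have hi'lt : i' < d := by rw [hi'def]; split <;> omega
      have hi'ne : i' ≠ i := by rw [hi'def]; split <;> omega
      have h21 : 1 < (Mx i').card := by have := hMx2 i' hi'lt; omega
      obtain ⟨q, hq, r, hr, hqr⟩ := Finset.one_lt_card.mp h21
      apply hqr
      exact aux_two q r i' i hi'ne
        ((mem_filter.mp hq).2.trans (mem_filter.mp hr).2.symm)
        ((hc q (hMxA i' hq)).trans (hc r (hMxA i' hr)).symm)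
    have hminmax : ∀ p ∈ U ∩ L, (∀ q ∈ A, p.2 ≤ q.2) ∨ (∀ q ∈ A, q.2 ≤ p.2) := by
      intro p hp
      rw [Finset.mem_inter] at hp
      obtain ⟨i, hi, hpx⟩ := (mem_filter.mp hp.1).2
      obtain ⟨j, hj, hpn⟩ := (mem_filter.mp hp.2).2
      have hij : i ≠ j := by
        intro h; exact hconst i hi p hpx (h ▸ hpn)
      rcases Nat.lt_or_ge i j with hlt | hge
      · left
        intro q hq
        have h1 : (q.1 : ℤ) + q.2 * i ≤ (p.1 : ℤ) + p.2 * i := by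
          exact_mod_cast hMxmax i p q hpx hq
        have h2 : (p.1 : ℤ) + p.2 * j ≤ (q.1 : ℤ) + q.2 * j := by
          exact_mod_cast hMnmin j p q hpn hq
        by_contra hcon
        push_neg at hcon
        have hq2 : (q.2 : ℤ) < p.2 := by exact_mod_cast hcon
        have hji : (i : ℤ) < j := by exact_mod_cast hlt
        have hpos : (0 : ℤ) < ((p.2 : ℤ) - q.2) * ((j : ℤ) - i) :=
          mul_pos (by linarith) (by linarith)
        nlinarith
      · right
        have hlt : j < i := by omega
        intro q hq
        have h1 : (q.1 : ℤ) + q.2 * i ≤ (p.1 : ℤ) + p.2 * i := by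
          exact_mod_cast hMxmax i p q hpx hq
        have h2 : (p.1 : ℤ) + p.2 * j ≤ (q.1 : ℤ) + q.2 * j := by
          exact_mod_cast hMnmin j p q hpn hq
        by_contra hcon
        push_neg at hcon
        have hq2 : (p.2 : ℤ) < q.2 := by exact_mod_cast hcon
        have hji : (j : ℤ) < i := by exact_mod_cast hlt
        have hpos : (0 : ℤ) < ((q.2 : ℤ) - p.2) * ((i : ℤ) - j) :=
          mul_pos (by linarith) (by linarith)
        nlinarith
    have hsplit : U ∩ L ⊆ (U ∩ L).filter (fun p => ∀ q ∈ A, p.2 ≤ q.2)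
        ∪ (U ∩ L).filter (fun p => ∀ q ∈ A, q.2 ≤ p.2) := by
      intro p hp
      rcases hminmax p hp with h | h
      · exact Finset.mem_union_left _ (mem_filter.mpr ⟨hp, h⟩)
      · exact Finset.mem_union_right _ (mem_filter.mpr ⟨hp, h⟩)
    have hsame : ∀ p p', p ∈ U ∩ L → p' ∈ U ∩ L → p.2 = p'.2 → p = p' := by
      intro p p' hp hp' hb
      rw [Finset.mem_inter] at hp hp'
      have hpA : p ∈ A := Finset.mem_of_mem_filter _ hp.1
      have hp'A : p' ∈ A := Finset.mem_of_mem_filter _ hp'.1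
      obtain ⟨i, hi, hpx⟩ := (mem_filter.mp hp.1).2
      obtain ⟨j, hj, hpn⟩ := (mem_filter.mp hp.2).2
      have h1 : p'.1 + p'.2 * i ≤ p.1 + p.2 * i := hMxmax i p p' hpx hp'A
      have h2 : p.1 + p.2 * j ≤ p'.1 + p'.2 * j := hMnmin j p p' hpn hp'A
      rw [hb] at h1 h2
      have ha1 : p'.1 ≤ p.1 := Nat.le_of_add_le_add_right h1
      have ha2 : p.1 ≤ p'.1 := Nat.le_of_add_le_add_right h2
      exact Prod.ext (le_antisymm ha2 ha1) hb
    have hc1 : ((U ∩ L).filter (fun p => ∀ q ∈ A, p.2 ≤ q.2)).card ≤ 1 := by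
      apply Finset.card_le_one.mpr
      intro p hp p' hp'
      rw [mem_filter] at hp hp'
      have hpA : p ∈ A := Finset.mem_of_mem_filter _ (Finset.mem_inter.mp hp.1).1
      have hp'A : p' ∈ A := Finset.mem_of_mem_filter _ (Finset.mem_inter.mp hp'.1).1
      exact hsame p p' hp.1 hp'.1 (le_antisymm (hp.2 p' hp'A) (hp'.2 p hpA))
    have hc2 : ((U ∩ L).filter (fun p => ∀ q ∈ A, q.2 ≤ p.2)).card ≤ 1 := by
      apply Finset.card_le_one.mpr
      intro p hp p' hp'
      rw [mem_filter] at hp hp'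
      have hpA : p ∈ A := Finset.mem_of_mem_filter _ (Finset.mem_inter.mp hp.1).1
      have hp'A : p' ∈ A := Finset.mem_of_mem_filter _ (Finset.mem_inter.mp hp'.1).1
      exact hsame p p' hp.1 hp'.1 (le_antisymm (hp'.2 p hpA) (hp.2 p' hp'A))
    have hover : (U ∩ L).card ≤ 2 := by
      calc (U ∩ L).card ≤ _ := Finset.card_le_card hsplit
        _ ≤ _ := Finset.card_union_le _ _
        _ ≤ 2 := by omega
    have hUL : (U ∪ L).card ≤ A.card :=
      Finset.card_le_card (Finset.union_subset (Finset.filter_subset _ _) (Finset.filter_subset _ _))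
    have := Finset.card_union_add_card_inter U L
    omega

lemma fiber_count {G H : Type*} [Fintype G] [Fintype H] [DecidableEq H]
    [AddCommGroup G] [AddCommGroup H]
    (φ : G →+ H) (hsurj : Function.Surjective φ) (y : H) :
    Fintype.card H * (Finset.univ.filter fun T => φ T = y).card = Fintype.card G := by
  classical
  have hfib : ∀ z : H, (Finset.univ.filter fun T => φ T = z).card
      = (Finset.univ.filter fun T => φ T = y).card := by
    intro z
    obtain ⟨T0, hT0⟩ := hsurj (y - z)
    apply Finset.card_bij (fun T _ => T + T0)
    · intro a ha
      simp only [Finset.mem_filter, Finset.mem_univ, true_and] at ha ⊢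
      rw [map_add, ha, hT0]
      abel
    · intro a _ b _ hab
      exact add_right_cancel hab
    · intro b hb
      simp only [Finset.mem_filter, Finset.mem_univ, true_and] at hb
      refine ⟨b - T0, ?_, by abel⟩
      simp only [Finset.mem_filter, Finset.mem_univ, true_and]
      rw [map_sub, hb, hT0]
      abel
  have hcard : Fintype.card G = ∑ z : H, (Finset.univ.filter fun T => φ T = z).card := by
    rw [← Finset.card_univ,
      Finset.card_eq_sum_card_fiberwise (f := fun T => φ T) (fun T _ => Finset.mem_univ (φ T))]
  rw [hcard, Finset.sum_congr rfl (fun z _ => hfib z), Finset.sum_const, Finset.card_univ,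
    smul_eq_mul]

lemma mulVec_surj {m n : Type*} [Fintype m] [Fintype n] [DecidableEq n] {K : Type*} [Field K]
    {M : Matrix m n K} (h : LinearIndependent K M) : Function.Surjective M.mulVec := by
  classical
  have h1 : M.rank = Fintype.card m := h.rank_matrix
  have h2 : LinearMap.range M.mulVecLin = ⊤ := by
    apply Submodule.eq_top_of_finrank_eq
    rw [← Matrix.rank, h1, Module.finrank_fintype_fun_eq_card]
  intro y
  obtain ⟨t, ht⟩ := LinearMap.range_eq_top.mp h2 y
  exact ⟨t, by rw [← Matrix.mulVecLin_apply, ht]⟩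

/-- For a set S of at most 2d−1 distinct keys (a,b) ∈ ℕ² with derived characters
D_i(a,b) = a + b·i (i < d), the derivation incidence matrix has full row rank over GF(2)
(its rows are linearly independent); consequently, if the tables T_0,...,T_{d−1} are
filled with independent uniform random values in GF(2)^ℓ, then the hash values
h(a,b) = T_0(D_0(a,b)) ⊕ ⋯ ⊕ T_{d−1}(D_{d−1}(a,b)) of the keys in S are uniformly and
independently distributed: every tuple Y of values is attained with probability
1/2^{ℓ·|S|}. (N bounds the table size; all derived characters of S lie below N.) -/
theorem stmt_18 (d ℓ N : ℕ) (hd : 1 ≤ d) (hℓ : 1 ≤ ℓ)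
    (S : Finset (ℕ × ℕ)) (hS : S.card ≤ 2 * d - 1)
    (hN : ∀ p ∈ S, ∀ i : Fin d, p.1 + p.2 * i.1 < N) :
    LinearIndependent (ZMod 2)
      (fun x : S => fun col : Fin d × ℕ =>
        if x.1.1 + x.1.2 * col.1.1 = col.2 then (1 : ZMod 2) else 0) ∧
    ∀ Y : ℕ × ℕ → Fin ℓ → ZMod 2,
      ((Finset.univ.filter (fun T : Fin d → Fin N → Fin ℓ → ZMod 2 =>
          ∀ p ∈ S,
            (∑ i : Fin d,
              if h : p.1 + p.2 * i.1 < N then T i ⟨p.1 + p.2 * i.1, h⟩ else 0) = Y p)).card : ℚ)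
        / ((Finset.univ : Finset (Fin d → Fin N → Fin ℓ → ZMod 2)).card : ℚ)
        = 1 / 2 ^ (ℓ * S.card) := by
  have hLI : LinearIndependent (ZMod 2)
      (fun x : S => fun col : Fin d × ℕ =>
        if x.1.1 + x.1.2 * col.1.1 = col.2 then (1 : ZMod 2) else 0) := by
    classical
    rw [Fintype.linearIndependent_iff]
    intro g hg
    by_contra hcon
    push_neg at hcon
    obtain ⟨x0, hx0⟩ := hcon
    set c : ℕ × ℕ → ZMod 2 := fun p => if h : p ∈ S then g ⟨p, h⟩ else 0 with hc
    set A : Finset (ℕ × ℕ) := S.filter (fun p => c p = 1) with hA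
    have hone : ∀ z : ZMod 2, z ≠ 0 → z = 1 := by decide
    have hAne : A.Nonempty := by
      refine ⟨x0.1, mem_filter.mpr ⟨x0.2, ?_⟩⟩
      rw [hc]
      simp only [x0.2, dif_pos]
      exact hone _ hx0
    have hAS : A ⊆ S := Finset.filter_subset _ _
    have heven : ∀ i, i < d → ∀ v, Even ((A.filter fun p => p.1 + p.2 * i = v).card) := by
      intro i hi v
      have h1 := congrFun hg (⟨i, hi⟩, v)
      rw [Finset.sum_apply] at h1
      simp only [Pi.zero_apply, Pi.smul_apply, smul_eq_mul, mul_ite, mul_one, mul_zero] at h1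
      have h2 : ∑ p ∈ S, (if p.1 + p.2 * i = v then c p else 0) = 0 := by
        have e : ∑ p ∈ S, (if p.1 + p.2 * i = v then c p else 0)
            = ∑ x : {x // x ∈ S}, (if (x : ℕ × ℕ).1 + (x : ℕ × ℕ).2 * i = v then g x else 0) := by
          rw [← Finset.sum_coe_sort S (f := fun p => if p.1 + p.2 * i = v then c p else 0)]
          exact Finset.sum_congr rfl fun x _ => by simp [hc, x.2]
        rw [e]
        exact h1
      rw [Finset.sum_ite, Finset.sum_const_zero, add_zero] at h2
      have h3 : ∑ p ∈ S.filter (fun p => p.1 + p.2 * i = v), c p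
          = ∑ p ∈ (S.filter (fun p => p.1 + p.2 * i = v)).filter (fun p => c p = 1), c p :=
        (Finset.sum_filter_of_ne (fun p _ hp => hone _ hp)).symm
      have hT : (A.filter fun p => p.1 + p.2 * i = v)
          = (S.filter (fun p => p.1 + p.2 * i = v)).filter (fun p => c p = 1) := by
        rw [hA, Finset.filter_filter, Finset.filter_filter]
        exact Finset.filter_congr (fun p _ => and_comm)
      have h4 : (((A.filter fun p => p.1 + p.2 * i = v)).card : ZMod 2) = 0 := by
        rw [hT, ← h2, h3]
        rw [Finset.sum_congr rfl (fun p hp => (Finset.mem_filter.mp hp).2)]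
        simp
      have := (ZMod.natCast_eq_zero_iff _ 2).mp h4
      exact (even_iff_two_dvd).mpr this
    have := key_lemma d hd A hAne heven
    have := Finset.card_le_card hAS
    omega
  refine ⟨hLI, ?_⟩
  intro Y
  set Mat : Matrix {x // x ∈ S} (Fin d × Fin N) (ZMod 2) :=
    fun x c => if x.1.1 + x.1.2 * c.1.1 = c.2.1 then 1 else 0 with hMat
  have hrows : LinearIndependent (ZMod 2) Mat := by
    rw [Fintype.linearIndependent_iff] at hLI ⊢
    intro g hg x
    apply hLI g ?_ x
    funext col
    obtain ⟨i, v⟩ := col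
    rw [Finset.sum_apply]
    by_cases hv : v < N
    · have h1 := congrFun hg (i, ⟨v, hv⟩)
      rw [Finset.sum_apply] at h1
      simpa [hMat, mul_ite] using h1
    · simp only [Pi.zero_apply]
      apply Finset.sum_eq_zero
      intro x _
      have hlt := hN x.1 x.2 i
      have : ¬(x.1.1 + x.1.2 * i.1 = v) := by omega
      simp [this]
  have hsurjM : Function.Surjective Mat.mulVec := mulVec_surj hrows
  have hmv : ∀ (u : Fin d × Fin N → ZMod 2) (x : {x // x ∈ S}),
      Mat.mulVec u x = ∑ i : Fin d, u (i, ⟨x.1.1 + x.1.2 * i.1, hN x.1 x.2 i⟩) := by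
    intro u x
    rw [Matrix.mulVec, dotProduct, Fintype.sum_prod_type]
    apply Finset.sum_congr rfl
    intro i _
    rw [Finset.sum_eq_single (⟨x.1.1 + x.1.2 * i.1, hN x.1 x.2 i⟩ : Fin N)]
    · simp [hMat]
    · intro v _ hv
      have hne : ¬(x.1.1 + x.1.2 * i.1 = v.1) := by
        intro h
        exact hv (Fin.ext h.symm)
      simp [hMat, hne]
    · intro h
      exact absurd (Finset.mem_univ _) h
  set φ : (Fin d → Fin N → Fin ℓ → ZMod 2) →+ ({x // x ∈ S} → Fin ℓ → ZMod 2) :=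
    { toFun := fun T x k => ∑ i : Fin d, T i ⟨x.1.1 + x.1.2 * i.1, hN x.1 x.2 i⟩ k
      map_zero' := by funext x k; simp
      map_add' := by
        intro a b
        funext x k
        simp [Finset.sum_add_distrib] } with hφ
  have hφs : Function.Surjective φ := by
    intro y
    have ht : ∀ k : Fin ℓ, ∃ t, Mat.mulVec t = fun x => y x k := fun k => hsurjM _
    choose t ht using ht
    refine ⟨fun i v k => t k (i, v), ?_⟩
    funext x k
    have h2 := congrFun (ht k) x
    rw [← h2, hmv]
    rfl
  have key : ∀ (T : Fin d → Fin N → Fin ℓ → ZMod 2) (p : ℕ × ℕ) (hp : p ∈ S),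
      (∑ i : Fin d, if h : p.1 + p.2 * i.1 < N then T i ⟨p.1 + p.2 * i.1, h⟩ else 0)
      = φ T ⟨p, hp⟩ := by
    intro T p hp
    funext k
    rw [Finset.sum_apply]
    show _ = ∑ i : Fin d, T i ⟨p.1 + p.2 * i.1, hN p hp i⟩ k
    apply Finset.sum_congr rfl
    intro i _
    rw [dif_pos (hN p hp i)]
  have hiff : ∀ T : Fin d → Fin N → Fin ℓ → ZMod 2,
      (∀ p ∈ S, (∑ i : Fin d,
          if h : p.1 + p.2 * i.1 < N then T i ⟨p.1 + p.2 * i.1, h⟩ else 0) = Y p)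
      ↔ φ T = fun x => Y x.1 := by
    intro T
    constructor
    · intro hC
      funext x
      rw [← key T x.1 x.2]
      exact hC x.1 x.2
    · intro hE p hp
      rw [key T p hp, hE]
  classical
  have hfe : (Finset.univ.filter (fun T : Fin d → Fin N → Fin ℓ → ZMod 2 =>
          ∀ p ∈ S,
            (∑ i : Fin d,
              if h : p.1 + p.2 * i.1 < N then T i ⟨p.1 + p.2 * i.1, h⟩ else 0) = Y p)).card
      = (Finset.univ.filter (fun T => φ T = fun x => Y x.1)).card := by
    congr 1
    exact Finset.filter_congr (fun T _ => hiff T)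
  rw [hfe]
  have hcount := fiber_count φ hφs (fun x => Y x.1)
  have hH : Fintype.card ({x // x ∈ S} → Fin ℓ → ZMod 2) = 2 ^ (ℓ * S.card) := by
    rw [Fintype.card_fun, Fintype.card_fun, ZMod.card, Fintype.card_fin, Fintype.card_coe,
      ← pow_mul]
  have hne : (Finset.univ.filter fun T => φ T = fun x => Y x.1).card ≠ 0 := by
    obtain ⟨T0, hT0⟩ := hφs (fun x => Y x.1)
    exact Finset.card_ne_zero_of_mem (Finset.mem_filter.mpr ⟨Finset.mem_univ _, hT0⟩)
  rw [Finset.card_univ, ← hcount, hH]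
  have hk : ((Finset.univ.filter fun T => φ T = fun x => Y x.1).card : ℚ) ≠ 0 :=
    Nat.cast_ne_zero.mpr hne
  have hp2 : (2 : ℚ) ^ (ℓ * S.card) ≠ 0 := by positivity
  push_cast
  rw [div_eq_div_iff (mul_ne_zero (by positivity) hk) hp2]
  ring
end
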